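/- arXiv:0807.2191 — 8 statements merged into one kernel-verified Lean document; each statement's English description precedes it below -/
import Mathlib

section
/- Let R be a commutative ring with an action of a finite group G by ring automorphisms, and assume the order |G| is invertible in R. If I and J are G-stable ideals of R with I + J = R, then (I ∩ R^G) + (J ∩ R^G) = R^G. (Geometrically: disjoint closed G-invariant subsets of Spec R have disjoint images in Spec R^G.) -/
open scoped Pointwise

/-- The invariant subring `R^G` of a group acting on a commutative ring by
ring automorphisms. -/
def fixedSubring (G R : Type*) [Group G] [CommRing R] [MulSemiringAction G R] :
    Subring R where
  carrier := {x : R | ∀ g : G, g • x = x}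
  one_mem' := fun g => smul_one g
  mul_mem' := by
    intro a b ha hb g
    rw [smul_mul', ha g, hb g]
  zero_mem' := fun g => smul_zero g
  add_mem' := by
    intro a b ha hb g
    rw [smul_add, ha g, hb g]
  neg_mem' := by
    intro a ha g
    rw [smul_neg, ha g]

/-- Let a finite group `G` act on a commutative ring `R` by ring automorphisms, with `|G|`
invertible in `R`.  If `I` and `J` are `G`-stable ideals with `I + J = R`, then
`(I ∩ R^G) + (J ∩ R^G) = R^G` (where the intersections are regarded as ideals of `R^G` via
pullback along the inclusion `R^G ↪ R`). -/
theorem statement4 (R : Type*) [CommRing R] (G : Type*) [Group G] [Finite G]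
    [MulSemiringAction G R] (hunit : IsUnit ((Nat.card G : ℕ) : R))
    (I J : Ideal R)
    (hI : ∀ g : G, g • (I : Set R) = (I : Set R))
    (hJ : ∀ g : G, g • (J : Set R) = (J : Set R))
    (hIJ : I ⊔ J = ⊤) :
    Ideal.comap (fixedSubring G R).subtype I ⊔ Ideal.comap (fixedSubring G R).subtype J = ⊤ := by
  have : Fintype G := Fintype.ofFinite G
  obtain ⟨u, hu⟩ := hunit
  have h1 : (1 : R) ∈ I ⊔ J := hIJ ▸ Submodule.mem_top
  rw [Submodule.mem_sup] at h1
  obtain ⟨a, ha, b, hb, hab⟩ := h1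
  set c : R := ((u⁻¹ : Rˣ) : R) with hcdef
  have hcn : c * ((Nat.card G : ℕ) : R) = 1 := by
    rw [← hu]; exact_mod_cast u.inv_mul
  have hgn : ∀ g : G, g • ((Nat.card G : ℕ) : R) = ((Nat.card G : ℕ) : R) := fun g =>
    map_natCast (MulSemiringAction.toRingHom G R g) _
  have hcfix : ∀ g : G, g • c = c := by
    intro g
    have h1 : (g • c) * ((Nat.card G : ℕ) : R) = 1 := by
      rw [← hgn g, ← smul_mul', hcn, smul_one]
    calc g • c = (g • c) * (((Nat.card G : ℕ) : R) * c) := by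
            rw [mul_comm ((Nat.card G : ℕ) : R) c, hcn, mul_one]
      _ = ((g • c) * ((Nat.card G : ℕ) : R)) * c := by ring
      _ = c := by rw [h1, one_mul]
  have hSfix : ∀ (x : R) (h : G), h • (∑ g : G, g • x) = ∑ g : G, g • x := by
    intro x h
    rw [Finset.smul_sum]
    exact Fintype.sum_equiv (Equiv.mulLeft h) _ _ (fun g => (mul_smul h g x).symm)
  have hSmem : ∀ (K : Ideal R), (∀ g : G, g • (K : Set R) = (K : Set R)) →
      ∀ x ∈ K, (∑ g : G, g • x) ∈ K := by
    intro K hK x hx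
    refine Ideal.sum_mem K fun g _ => ?_
    have := Set.smul_mem_smul_set (a := g) hx
    rwa [hK g] at this
  -- the two candidate elements
  have hafix : ∀ g : G, g • (c * ∑ g : G, g • a) = c * ∑ g : G, g • a := by
    intro g; rw [smul_mul', hcfix g, hSfix a g]
  have hbfix : ∀ g : G, g • (c * ∑ g : G, g • b) = c * ∑ g : G, g • b := by
    intro g; rw [smul_mul', hcfix g, hSfix b g]
  have hamem : c * ∑ g : G, g • a ∈ I := Ideal.mul_mem_left I c (hSmem I hI a ha)
  have hbmem : c * ∑ g : G, g • b ∈ J := Ideal.mul_mem_left J c (hSmem J hJ b hb)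
  have hsum : (c * ∑ g : G, g • a) + (c * ∑ g : G, g • b) = 1 := by
    rw [← mul_add, ← Finset.sum_add_distrib]
    have : ∀ g : G, g • a + g • b = 1 := by
      intro g; rw [← smul_add, hab, smul_one]
    simp only [this]
    rw [Finset.sum_const, Finset.card_univ, nsmul_eq_mul, mul_one, ← Nat.card_eq_fintype_card,
      hcn]
  rw [Ideal.eq_top_iff_one, Submodule.mem_sup]
  exact ⟨⟨c * ∑ g : G, g • a, hafix⟩, hamem, ⟨c * ∑ g : G, g • b, hbfix⟩, hbmem,
    Subtype.ext hsum⟩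
end

section
/- Let k be a field, Λ a finitely generated abelian group with group algebra k[Λ], and R a commutative k-algebra. Write ε : k[Λ] → k for the k-algebra homomorphism with ε(λ) = 1 for all λ ∈ Λ, and Δ : k[Λ] → k[Λ] ⊗_k k[Λ] for the k-algebra homomorphism with Δ(λ) = λ ⊗ λ. Then there is a bijection between: (a) k-algebra homomorphisms μ : R → k[Λ] ⊗_k R satisfying (ε ⊗ id_R) ∘ μ = id_R (under the canonical identification k ⊗_k R ≅ R) and (id_{k[Λ]} ⊗ μ) ∘ μ = (Δ ⊗ id_R) ∘ μ; and (b) Λ-gradings of R, i.e. families (R_χ)_{χ∈Λ} of k-submodules of R such that R is the internal direct sum ⊕_{χ∈Λ} R_χ, 1 ∈ R₀, and R_χ · R_{χ′} ⊆ R_{χ+χ′} for all χ, χ′ ∈ Λ. Under this bijection, the grading attached to μ is given by R_χ = { f ∈ R : μ(f) = λ_χ ⊗ f }, where λ_χ denotes the basis element of k[Λ] corresponding to χ. -/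
set_option linter.unusedSectionVars false


open TensorProduct

/-- The counit `ε : k[Λ] → k` of the group algebra, with `ε(λ) = 1` on group basis elements. -/
noncomputable def groupAlgCounit (k Λ : Type*) [CommSemiring k] [AddCommGroup Λ] :
    AddMonoidAlgebra k Λ →ₐ[k] k :=
  AddMonoidAlgebra.lift k k Λ 1

/-- The diagonal `λ ↦ λ ⊗ λ` as a monoid homomorphism into the tensor square of the group
algebra. -/
noncomputable def groupAlgDiagHom (k Λ : Type*) [CommSemiring k] [AddCommGroup Λ] :
    Multiplicative Λ →* (AddMonoidAlgebra k Λ ⊗[k] AddMonoidAlgebra k Λ) where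
  toFun χ :=
    AddMonoidAlgebra.single (Multiplicative.toAdd χ) 1 ⊗ₜ[k]
      AddMonoidAlgebra.single (Multiplicative.toAdd χ) 1
  map_one' := by
    rw [toAdd_one, ← AddMonoidAlgebra.one_def, Algebra.TensorProduct.one_def]
  map_mul' a b := by
    rw [toAdd_mul, Algebra.TensorProduct.tmul_mul_tmul,
      AddMonoidAlgebra.single_mul_single, one_mul]

/-- The comultiplication `Δ : k[Λ] → k[Λ] ⊗ k[Λ]` of the group algebra, with
`Δ(λ) = λ ⊗ λ` on group basis elements. -/
noncomputable def groupAlgComul (k Λ : Type*) [CommSemiring k] [AddCommGroup Λ] :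
    AddMonoidAlgebra k Λ →ₐ[k] (AddMonoidAlgebra k Λ ⊗[k] AddMonoidAlgebra k Λ) :=
  AddMonoidAlgebra.lift k _ Λ (groupAlgDiagHom k Λ)

open TensorProduct

section Aux

variable (k : Type*) [Field k] (Λ : Type*) [AddCommGroup Λ] [DecidableEq Λ]
  (R : Type*) [CommRing R] [Algebra k R]

/-- identification of `k[Λ] ⊗ N` with `Λ →₀ N` -/
noncomputable def eqvN (N : Type*) [AddCommGroup N] [Module k N] :
    (AddMonoidAlgebra k Λ ⊗[k] N) ≃ₗ[k] (Λ →₀ N) :=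
  (TensorProduct.congr (AddMonoidAlgebra.coeffLinearEquiv k) (LinearEquiv.refl k N)).trans
    (TensorProduct.finsuppScalarLeft k N Λ)

variable {k Λ R}

theorem eqvN_single_tmul {N : Type*} [AddCommGroup N] [Module k N] (χ : Λ) (c : k) (n : N) :
    eqvN k Λ N (AddMonoidAlgebra.single χ c ⊗ₜ[k] n) = Finsupp.single χ (c • n) := by
  ext χ'
  rw [eqvN, LinearEquiv.trans_apply, TensorProduct.congr_tmul,
    TensorProduct.finsuppScalarLeft_apply_tmul_apply]
  show (Finsupp.single χ c) χ' • n = _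
  rcases eq_or_ne χ χ' with rfl | h
  · simp
  · rw [Finsupp.single_eq_of_ne' h, Finsupp.single_eq_of_ne' h, zero_smul]

theorem eqvN_symm_single {N : Type*} [AddCommGroup N] [Module k N] (χ : Λ) (n : N) :
    (eqvN k Λ N).symm (Finsupp.single χ n) = AddMonoidAlgebra.single χ (1:k) ⊗ₜ[k] n := by
  rw [eqvN, LinearEquiv.symm_trans_apply, TensorProduct.finsuppScalarLeft_symm_apply_single,
    TensorProduct.congr_symm_tmul]
  rfl

/-- extensionality for linear maps out of `k[Λ] ⊗ N` -/
theorem tensor_ext {N X : Type*} [AddCommGroup N] [Module k N] [AddCommMonoid X] [Module k X]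
    {L₁ L₂ : (AddMonoidAlgebra k Λ ⊗[k] N) →ₗ[k] X}
    (h : ∀ (χ : Λ) (c : k) (n : N),
      L₁ (AddMonoidAlgebra.single χ c ⊗ₜ[k] n) = L₂ (AddMonoidAlgebra.single χ c ⊗ₜ[k] n)) :
    L₁ = L₂ := by
  apply TensorProduct.ext'
  intro p n
  induction p using AddMonoidAlgebra.induction_linear with
  | zero => rw [show (0 : AddMonoidAlgebra k Λ) ⊗ₜ[k] n = 0 from TensorProduct.zero_tmul _ n,
      map_zero, map_zero]
  | add a b ha hb =>
      rw [show (a + b) ⊗ₜ[k] n = a ⊗ₜ n + b ⊗ₜ n from TensorProduct.add_tmul a b n,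
        map_add, map_add, ha, hb]
  | single χ c => exact h χ c n

theorem counit_single (χ : Λ) (c : k) :
    groupAlgCounit k Λ (AddMonoidAlgebra.single χ c) = c := by
  rw [groupAlgCounit]
  erw [AddMonoidAlgebra.lift_single]
  simp

theorem comul_single (χ : Λ) :
    groupAlgComul k Λ (AddMonoidAlgebra.single χ (1:k)) =
      AddMonoidAlgebra.single χ (1:k) ⊗ₜ[k] AddMonoidAlgebra.single χ (1:k) := by
  rw [groupAlgComul]
  erw [AddMonoidAlgebra.lift_single]
  rw [one_smul]
  rfl

end Aux
section Coact
variable {k : Type*} [Field k] {Λ : Type*} [AddCommGroup Λ] [DecidableEq Λ]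
  {R : Type*} [CommRing R] [Algebra k R]

variable (μ : R →ₐ[k] (AddMonoidAlgebra k Λ ⊗[k] R))

/-- the `χ`-component projection attached to a coaction -/
noncomputable def piComp (χ : Λ) : R →ₗ[k] R :=
  (Finsupp.lapply χ : (Λ →₀ R) →ₗ[k] R) ∘ₗ (eqvN k Λ R).toLinearMap ∘ₗ μ.toLinearMap

theorem piComp_apply (χ : Λ) (f : R) : piComp μ χ f = eqvN k Λ R (μ f) χ := rfl

/-- the degree-`χ` piece attached to a coaction -/
noncomputable def gradeOf (χ : Λ) : Submodule k R where
  carrier := {f : R | μ f = AddMonoidAlgebra.single χ (1:k) ⊗ₜ[k] f}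
  add_mem' := by
    intro a b ha hb
    simp only [Set.mem_setOf_eq] at *
    rw [map_add, ha, hb, TensorProduct.tmul_add]
  zero_mem' := by
    simp only [Set.mem_setOf_eq, map_zero, TensorProduct.tmul_zero]
  smul_mem' := by
    intro c x hx
    simp only [Set.mem_setOf_eq] at *
    rw [map_smul, hx, TensorProduct.tmul_smul]

theorem mem_gradeOf {χ : Λ} {f : R} :
    f ∈ gradeOf μ χ ↔ μ f = AddMonoidAlgebra.single χ (1:k) ⊗ₜ[k] f := Iff.rfl

theorem piComp_of_mem {χ χ' : Λ} {f : R} (hf : f ∈ gradeOf μ χ) :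
    piComp μ χ' f = if χ = χ' then f else 0 := by
  rw [piComp_apply, (mem_gradeOf μ).mp hf, eqvN_single_tmul, one_smul]
  rcases eq_or_ne χ χ' with rfl | h
  · rw [if_pos rfl, Finsupp.single_eq_same]
  · rw [if_neg h, Finsupp.single_eq_of_ne' h]

/-- coassociativity implies each projection lands in the corresponding graded piece -/
theorem piComp_mem_gradeOf
    (ha : ∀ f : R,
      (Algebra.TensorProduct.map (AlgHom.id k (AddMonoidAlgebra k Λ)) μ) (μ f) =
        (Algebra.TensorProduct.assoc k k k (AddMonoidAlgebra k Λ) (AddMonoidAlgebra k Λ) R)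
          ((Algebra.TensorProduct.map (groupAlgComul k Λ) (AlgHom.id k R)) (μ f)))
    (χ : Λ) (f : R) : piComp μ χ f ∈ gradeOf μ χ := by
  classical
  set T : (AddMonoidAlgebra k Λ ⊗[k] (AddMonoidAlgebra k Λ ⊗[k] R)) →ₗ[k]
      (AddMonoidAlgebra k Λ ⊗[k] R) :=
    (Finsupp.lapply χ : (Λ →₀ (AddMonoidAlgebra k Λ ⊗[k] R)) →ₗ[k] _) ∘ₗ
      (eqvN k Λ (AddMonoidAlgebra k Λ ⊗[k] R)).toLinearMap with hT
  have hTs : ∀ (χ' : Λ) (c : k) (z : AddMonoidAlgebra k Λ ⊗[k] R),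
      T (AddMonoidAlgebra.single χ' c ⊗ₜ[k] z) = if χ' = χ then c • z else 0 := by
    intro χ' c z
    rw [hT]
    simp only [LinearMap.coe_comp, Function.comp_apply, LinearEquiv.coe_coe]
    rw [eqvN_single_tmul]
    rcases eq_or_ne χ' χ with rfl | h
    · rw [if_pos rfl, Finsupp.lapply_apply, Finsupp.single_eq_same]
    · rw [if_neg h, Finsupp.lapply_apply, Finsupp.single_eq_of_ne' h]
  have key1 : μ.toLinearMap ∘ₗ (Finsupp.lapply χ : (Λ →₀ R) →ₗ[k] R) ∘ₗ
        (eqvN k Λ R).toLinearMap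
      = T ∘ₗ (Algebra.TensorProduct.map (AlgHom.id k (AddMonoidAlgebra k Λ)) μ).toLinearMap := by
    apply tensor_ext
    intro χ' c f
    simp only [LinearMap.coe_comp, Function.comp_apply, LinearEquiv.coe_coe, AlgHom.toLinearMap_apply]
    rw [eqvN_single_tmul, Algebra.TensorProduct.map_tmul, AlgHom.coe_id, id_eq, hTs]
    rcases eq_or_ne χ' χ with rfl | h
    · rw [if_pos rfl, Finsupp.lapply_apply, Finsupp.single_eq_same, map_smul]
    · rw [if_neg h, Finsupp.lapply_apply, Finsupp.single_eq_of_ne' h, map_zero]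
  have key2 : (TensorProduct.mk k (AddMonoidAlgebra k Λ) R
          (AddMonoidAlgebra.single χ (1:k))) ∘ₗ
        (Finsupp.lapply χ : (Λ →₀ R) →ₗ[k] R) ∘ₗ (eqvN k Λ R).toLinearMap
      = T ∘ₗ (Algebra.TensorProduct.assoc k k k (AddMonoidAlgebra k Λ)
            (AddMonoidAlgebra k Λ) R).toLinearMap ∘ₗ
          (Algebra.TensorProduct.map (groupAlgComul k Λ) (AlgHom.id k R)).toLinearMap := by
    apply tensor_ext
    intro χ' c f
    simp only [LinearMap.coe_comp, Function.comp_apply, LinearEquiv.coe_coe,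
      AlgHom.toLinearMap_apply, AlgEquiv.toLinearMap_apply, AlgEquiv.coe_toLinearEquiv]
    rw [eqvN_single_tmul, Algebra.TensorProduct.map_tmul, AlgHom.coe_id, id_eq]
    have hc : AddMonoidAlgebra.single χ' c = c • AddMonoidAlgebra.single χ' (1:k) := by
      rw [AddMonoidAlgebra.smul_single', mul_one]
    rw [hc, map_smul, comul_single, ← TensorProduct.smul_tmul', map_smul, map_smul,
      Algebra.TensorProduct.assoc_tmul, hTs]
    rcases eq_or_ne χ' χ with rfl | h
    · rw [if_pos rfl, Finsupp.lapply_apply, Finsupp.single_eq_same, TensorProduct.mk_apply,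
        one_smul, TensorProduct.tmul_smul]
    · rw [if_neg h, Finsupp.lapply_apply, Finsupp.single_eq_of_ne' h, TensorProduct.mk_apply,
        TensorProduct.tmul_zero, smul_zero]
  rw [mem_gradeOf]
  have h1 := congrArg (fun L => L (μ f)) key1
  have h2 := congrArg (fun L => L (μ f)) key2
  simp only [LinearMap.coe_comp, Function.comp_apply, LinearEquiv.coe_coe,
    AlgHom.toLinearMap_apply, AlgEquiv.toLinearMap_apply, TensorProduct.mk_apply] at h1 h2
  rw [piComp_apply]
  calc μ ((eqvN k Λ R) (μ f) χ) = T ((Algebra.TensorProduct.map (AlgHom.id k _) μ) (μ f)) := h1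
    _ = T ((Algebra.TensorProduct.assoc k k k _ _ R)
          ((Algebra.TensorProduct.map (groupAlgComul k Λ) (AlgHom.id k R)) (μ f))) := by rw [ha]
    _ = AddMonoidAlgebra.single χ (1:k) ⊗ₜ[k] ((eqvN k Λ R) (μ f) χ) := h2.symm

/-- counit implies the projections sum to the identity -/
theorem sum_piComp
    (hc : ∀ f : R, (Algebra.TensorProduct.lid k R)
      ((Algebra.TensorProduct.map (groupAlgCounit k Λ) (AlgHom.id k R)) (μ f)) = f)
    (f : R) : ((eqvN k Λ R) (μ f)).sum (fun _ r => r) = f := by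
  classical
  set S : (Λ →₀ R) →ₗ[k] R := Finsupp.lsum k (fun _ => LinearMap.id) with hS
  have hSap : ∀ g : Λ →₀ R, S g = g.sum fun _ r => r := by
    intro g; rw [hS]; rfl
  have key : S ∘ₗ (eqvN k Λ R).toLinearMap
      = (Algebra.TensorProduct.lid k R).toLinearMap ∘ₗ
          (Algebra.TensorProduct.map (groupAlgCounit k Λ) (AlgHom.id k R)).toLinearMap := by
    apply tensor_ext
    intro χ c f
    simp only [LinearMap.coe_comp, Function.comp_apply, LinearEquiv.coe_coe,
      AlgHom.toLinearMap_apply, AlgEquiv.toLinearMap_apply, AlgEquiv.coe_toLinearEquiv]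
    rw [eqvN_single_tmul, hSap, Finsupp.sum_single_index rfl,
      Algebra.TensorProduct.map_tmul, counit_single, AlgHom.coe_id, id_eq,
      Algebra.TensorProduct.lid_tmul]
  have := congrArg (fun L => L (μ f)) key
  simp only [LinearMap.coe_comp, Function.comp_apply, LinearEquiv.coe_coe,
    AlgHom.toLinearMap_apply, AlgEquiv.toLinearMap_apply, AlgEquiv.coe_toLinearEquiv] at this
  rw [← hSap, this, hc]

end Coact
section Internal
variable {k : Type*} [Field k] {Λ : Type*} [AddCommGroup Λ] [DecidableEq Λ]
  {R : Type*} [CommRing R] [Algebra k R]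
variable (μ : R →ₐ[k] (AddMonoidAlgebra k Λ ⊗[k] R))

theorem one_mem_gradeOf : (1 : R) ∈ gradeOf μ 0 := by
  rw [mem_gradeOf, map_one, Algebra.TensorProduct.one_def, AddMonoidAlgebra.one_def]

theorem mul_mem_gradeOf (χ χ' : Λ) (x y : R) (hx : x ∈ gradeOf μ χ) (hy : y ∈ gradeOf μ χ') :
    x * y ∈ gradeOf μ (χ + χ') := by
  rw [mem_gradeOf] at *
  rw [map_mul, hx, hy, Algebra.TensorProduct.tmul_mul_tmul,
    AddMonoidAlgebra.single_mul_single, one_mul]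

theorem gradeOf_isInternal
    (hc : ∀ f : R, (Algebra.TensorProduct.lid k R)
      ((Algebra.TensorProduct.map (groupAlgCounit k Λ) (AlgHom.id k R)) (μ f)) = f)
    (ha : ∀ f : R,
      (Algebra.TensorProduct.map (AlgHom.id k (AddMonoidAlgebra k Λ)) μ) (μ f) =
        (Algebra.TensorProduct.assoc k k k (AddMonoidAlgebra k Λ) (AddMonoidAlgebra k Λ) R)
          ((Algebra.TensorProduct.map (groupAlgComul k Λ) (AlgHom.id k R)) (μ f))) :
    DirectSum.IsInternal (gradeOf μ) := by
  classical
  constructor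
  · -- injective
    rw [injective_iff_map_eq_zero]
    intro v hv
    have hv' : DirectSum.coeLinearMap (gradeOf μ) v = 0 := hv
    refine DFunLike.ext v 0 fun χ => ?_
    have key : (gradeOf μ χ).subtype ∘ₗ
          (DirectSum.component k Λ (fun χ' => gradeOf μ χ') χ)
        = (piComp μ χ) ∘ₗ DirectSum.coeLinearMap (gradeOf μ) := by
      apply DirectSum.linearMap_ext
      intro χ'
      ext x
      simp only [LinearMap.coe_comp, Function.comp_apply, Submodule.coe_subtype,
        DirectSum.coeLinearMap_of, DirectSum.component, DirectSum.lof_eq_of]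
      rw [piComp_of_mem μ x.2]
      rcases eq_or_ne χ' χ with rfl | h
      · rw [if_pos rfl]
        erw [DirectSum.of_eq_same]
      · rw [if_neg h]
        erw [DFinsupp.lapply_apply, DirectSum.of_eq_of_ne _ _ _ h.symm]
        rfl
    have := congrArg (fun L => L v) key
    simp only [LinearMap.coe_comp, Function.comp_apply, Submodule.coe_subtype] at this
    have hcomp : ((v χ : gradeOf μ χ) : R) = piComp μ χ (DirectSum.coeLinearMap (gradeOf μ) v) :=
      this
    rw [hv', map_zero] at hcomp
    exact Subtype.ext hcomp
  · -- surjective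
    intro f
    refine ⟨∑ χ ∈ ((eqvN k Λ R) (μ f)).support,
      DirectSum.of (fun χ' => gradeOf μ χ') χ ⟨piComp μ χ f, piComp_mem_gradeOf μ ha χ f⟩, ?_⟩
    have : DirectSum.coeAddMonoidHom (gradeOf μ)
        (∑ χ ∈ ((eqvN k Λ R) (μ f)).support,
          DirectSum.of (fun χ' => gradeOf μ χ') χ ⟨piComp μ χ f, piComp_mem_gradeOf μ ha χ f⟩)
        = ∑ χ ∈ ((eqvN k Λ R) (μ f)).support, piComp μ χ f := by
      rw [map_sum]
      refine Finset.sum_congr rfl fun χ _ => ?_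
      exact DirectSum.coeAddMonoidHom_of _ _ _
    rw [this]
    have hsum := sum_piComp μ hc f
    rw [Finsupp.sum] at hsum
    simpa only [piComp_apply] using hsum

end Internal
section Coact2
variable {k : Type*} [Field k] {Λ : Type*} [AddCommGroup Λ] [DecidableEq Λ]
  {R : Type*} [CommRing R] [Algebra k R]

/-- a `Decomposition` instance from internality -/
noncomputable def decompOf (ℬ : Λ → Submodule k R) (hi : DirectSum.IsInternal ℬ) :
    DirectSum.Decomposition ℬ where
  decompose' := (LinearEquiv.ofBijective (DirectSum.coeLinearMap ℬ) hi).symm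
  left_inv f := (LinearEquiv.ofBijective (DirectSum.coeLinearMap ℬ) hi).apply_symm_apply f
  right_inv v := (LinearEquiv.ofBijective (DirectSum.coeLinearMap ℬ) hi).symm_apply_apply v

/-- the graded monoid structure -/
def gmOf (ℬ : Λ → Submodule k R) (h1 : (1 : R) ∈ ℬ 0)
    (hm : ∀ (χ χ' : Λ) (x y : R), x ∈ ℬ χ → y ∈ ℬ χ' → x * y ∈ ℬ (χ + χ')) :
    SetLike.GradedMonoid ℬ where
  one_mem := h1
  mul_mem := fun {χ χ' x y} hx hy => hm χ χ' x y hx hy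

/-- the graded algebra structure -/
noncomputable def gaOf (ℬ : Λ → Submodule k R) (hi : DirectSum.IsInternal ℬ)
    (h1 : (1 : R) ∈ ℬ 0)
    (hm : ∀ (χ χ' : Λ) (x y : R), x ∈ ℬ χ → y ∈ ℬ χ' → x * y ∈ ℬ (χ + χ')) :
    GradedAlgebra ℬ :=
  letI : SetLike.GradedMonoid ℬ := gmOf ℬ h1 hm
  letI : DirectSum.Decomposition ℬ := decompOf ℬ hi
  { gmOf ℬ h1 hm, decompOf ℬ hi with }

/-- the coaction attached to a grading -/
noncomputable def coactOf (ℬ : Λ → Submodule k R) (hi : DirectSum.IsInternal ℬ)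
    (h1 : (1 : R) ∈ ℬ 0)
    (hm : ∀ (χ χ' : Λ) (x y : R), x ∈ ℬ χ → y ∈ ℬ χ' → x * y ∈ ℬ (χ + χ')) :
    R →ₐ[k] (AddMonoidAlgebra k Λ ⊗[k] R) :=
  letI : GradedAlgebra ℬ := gaOf ℬ hi h1 hm
  (DirectSum.toAlgebra k (fun χ => ℬ χ)
    (fun χ => (TensorProduct.mk k (AddMonoidAlgebra k Λ) R
        (AddMonoidAlgebra.single χ (1:k))) ∘ₗ (ℬ χ).subtype)
    (by
      simp only [LinearMap.coe_comp, Function.comp_apply, Submodule.coe_subtype,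
        TensorProduct.mk_apply, SetLike.coe_gOne]
      rw [Algebra.TensorProduct.one_def, AddMonoidAlgebra.one_def])
    (by
      intro χ χ' x y
      simp only [LinearMap.coe_comp, Function.comp_apply, Submodule.coe_subtype,
        TensorProduct.mk_apply, SetLike.coe_gMul]
      rw [Algebra.TensorProduct.tmul_mul_tmul, AddMonoidAlgebra.single_mul_single,
        one_mul])).comp (DirectSum.decomposeAlgEquiv ℬ).toAlgHom

variable (ℬ : Λ → Submodule k R) (hi : DirectSum.IsInternal ℬ) (h1 : (1 : R) ∈ ℬ 0)
  (hm : ∀ (χ χ' : Λ) (x y : R), x ∈ ℬ χ → y ∈ ℬ χ' → x * y ∈ ℬ (χ + χ'))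

theorem coactOf_of_mem {χ : Λ} {f : R} (hf : f ∈ ℬ χ) :
    coactOf ℬ hi h1 hm f = AddMonoidAlgebra.single χ (1:k) ⊗ₜ[k] f := by
  letI : GradedAlgebra ℬ := gaOf ℬ hi h1 hm
  rw [coactOf]
  simp only [AlgHom.coe_comp, Function.comp_apply, AlgEquiv.toAlgHom_eq_coe,
    AlgHom.coe_coe, DirectSum.decomposeAlgEquiv_apply]
  rw [show (DirectSum.decomposeAlgEquiv ℬ : R →ₐ[k] _) f = DirectSum.decompose ℬ f from rfl]
  rw [DirectSum.decompose_of_mem ℬ hf, DirectSum.toAlgebra_apply]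
  erw [DirectSum.toSemiring_of]
  rfl

theorem coactOf_counit (f : R) :
    (Algebra.TensorProduct.lid k R)
      ((Algebra.TensorProduct.map (groupAlgCounit k Λ) (AlgHom.id k R))
        (coactOf ℬ hi h1 hm f)) = f := by
  classical
  obtain ⟨v, rfl⟩ := hi.surjective f
  set C : R →ₗ[k] R :=
    (Algebra.TensorProduct.lid k R).toLinearMap ∘ₗ
      (Algebra.TensorProduct.map (groupAlgCounit k Λ) (AlgHom.id k R)).toLinearMap ∘ₗ
      (coactOf ℬ hi h1 hm : R →ₐ[k] (AddMonoidAlgebra k Λ ⊗[k] R)).toLinearMap with hC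
  show C (DirectSum.coeAddMonoidHom ℬ v) = _
  have key : C ∘ₗ DirectSum.coeLinearMap ℬ = DirectSum.coeLinearMap ℬ := by
    apply DirectSum.linearMap_ext
    intro χ
    ext x
    simp only [LinearMap.coe_comp, Function.comp_apply, DirectSum.lof_eq_of,
      DirectSum.coeLinearMap_of, hC, AlgHom.toLinearMap_apply, AlgEquiv.toLinearMap_apply]
    rw [coactOf_of_mem ℬ hi h1 hm x.2, Algebra.TensorProduct.map_tmul, counit_single,
      AlgHom.coe_id, id_eq, Algebra.TensorProduct.lid_tmul, one_smul]
  exact congrArg (fun L => L v) key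

theorem coactOf_coassoc (f : R) :
    (Algebra.TensorProduct.map (AlgHom.id k (AddMonoidAlgebra k Λ)) (coactOf ℬ hi h1 hm))
        ((coactOf ℬ hi h1 hm) f) =
      (Algebra.TensorProduct.assoc k k k (AddMonoidAlgebra k Λ) (AddMonoidAlgebra k Λ) R)
        ((Algebra.TensorProduct.map (groupAlgComul k Λ) (AlgHom.id k R))
          ((coactOf ℬ hi h1 hm) f)) := by
  classical
  obtain ⟨v, rfl⟩ := hi.surjective f
  set A : R →ₗ[k] (AddMonoidAlgebra k Λ ⊗[k] (AddMonoidAlgebra k Λ ⊗[k] R)) :=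
    (Algebra.TensorProduct.map (AlgHom.id k (AddMonoidAlgebra k Λ))
        (coactOf ℬ hi h1 hm)).toLinearMap ∘ₗ (coactOf ℬ hi h1 hm).toLinearMap with hA
  set B : R →ₗ[k] (AddMonoidAlgebra k Λ ⊗[k] (AddMonoidAlgebra k Λ ⊗[k] R)) :=
    (Algebra.TensorProduct.assoc k k k (AddMonoidAlgebra k Λ)
        (AddMonoidAlgebra k Λ) R).toLinearMap ∘ₗ
      (Algebra.TensorProduct.map (groupAlgComul k Λ) (AlgHom.id k R)).toLinearMap ∘ₗ
      (coactOf ℬ hi h1 hm).toLinearMap with hB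
  show A (DirectSum.coeAddMonoidHom ℬ v) = B (DirectSum.coeAddMonoidHom ℬ v)
  have key : A ∘ₗ DirectSum.coeLinearMap ℬ = B ∘ₗ DirectSum.coeLinearMap ℬ := by
    apply DirectSum.linearMap_ext
    intro χ
    ext x
    simp only [LinearMap.coe_comp, Function.comp_apply, DirectSum.lof_eq_of,
      DirectSum.coeLinearMap_of, hA, hB, AlgHom.toLinearMap_apply, AlgEquiv.toLinearMap_apply]
    rw [coactOf_of_mem ℬ hi h1 hm x.2, Algebra.TensorProduct.map_tmul,
      coactOf_of_mem ℬ hi h1 hm x.2, Algebra.TensorProduct.map_tmul, comul_single,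
      AlgHom.coe_id, id_eq, AlgHom.coe_id, id_eq, Algebra.TensorProduct.assoc_tmul]
  exact congrArg (fun L => L v) key

theorem gradeOf_coactOf : gradeOf (coactOf ℬ hi h1 hm) = ℬ := by
  classical
  letI : GradedAlgebra ℬ := gaOf ℬ hi h1 hm
  funext χ
  ext f
  rw [mem_gradeOf]
  constructor
  · intro h
    set q : (AddMonoidAlgebra k Λ ⊗[k] R) →ₗ[k] R :=
      (Finsupp.lapply χ : (Λ →₀ R) →ₗ[k] R) ∘ₗ (eqvN k Λ R).toLinearMap with hq
    have hqs : ∀ (χ' : Λ) (g : R),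
        q (AddMonoidAlgebra.single χ' (1:k) ⊗ₜ[k] g) = if χ' = χ then g else 0 := by
      intro χ' g
      rw [hq]
      simp only [LinearMap.coe_comp, Function.comp_apply, LinearEquiv.coe_coe]
      rw [eqvN_single_tmul, one_smul]
      rcases eq_or_ne χ' χ with rfl | hne
      · rw [if_pos rfl, Finsupp.lapply_apply, Finsupp.single_eq_same]
      · rw [if_neg hne, Finsupp.lapply_apply, Finsupp.single_eq_of_ne' hne]
    have key : q ∘ₗ (coactOf ℬ hi h1 hm).toLinearMap ∘ₗ DirectSum.coeLinearMap ℬ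
        = (ℬ χ).subtype ∘ₗ DirectSum.component k Λ (fun χ' => (ℬ χ' : Submodule k R)) χ := by
      apply DirectSum.linearMap_ext
      intro χ'
      ext x
      simp only [LinearMap.coe_comp, Function.comp_apply, DirectSum.lof_eq_of,
        DirectSum.coeLinearMap_of, AlgHom.toLinearMap_apply, Submodule.coe_subtype,
        DirectSum.component, DirectSum.lof_eq_of]
      rw [coactOf_of_mem ℬ hi h1 hm x.2, hqs]
      rcases eq_or_ne χ' χ with rfl | hne
      · rw [if_pos rfl]
        erw [DirectSum.of_eq_same]
      · rw [if_neg hne]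
        erw [DFinsupp.lapply_apply, DirectSum.of_eq_of_ne _ _ _ hne.symm]
        rfl
    have hfv := congrArg (fun L => L (DirectSum.decompose ℬ f)) key
    simp only [LinearMap.coe_comp, Function.comp_apply, AlgHom.toLinearMap_apply,
      Submodule.coe_subtype] at hfv
    have hcoe : DirectSum.coeLinearMap ℬ (DirectSum.decompose ℬ f) = f :=
      (LinearEquiv.ofBijective (DirectSum.coeLinearMap ℬ) hi).apply_symm_apply f
    rw [hcoe, h, hqs, if_pos rfl] at hfv
    have h3 : ((DirectSum.decompose ℬ f) χ : R) = f := hfv.symm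
    exact h3 ▸ ((DirectSum.decompose ℬ f) χ).2
  · intro h
    exact coactOf_of_mem ℬ hi h1 hm h

end Coact2
section LeftInv
variable {k : Type*} [Field k] {Λ : Type*} [AddCommGroup Λ] [DecidableEq Λ]
  {R : Type*} [CommRing R] [Algebra k R]

theorem coactOf_gradeOf (μ : R →ₐ[k] (AddMonoidAlgebra k Λ ⊗[k] R))
    (hc : ∀ f : R, (Algebra.TensorProduct.lid k R)
      ((Algebra.TensorProduct.map (groupAlgCounit k Λ) (AlgHom.id k R)) (μ f)) = f)
    (ha : ∀ f : R,
      (Algebra.TensorProduct.map (AlgHom.id k (AddMonoidAlgebra k Λ)) μ) (μ f) =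
        (Algebra.TensorProduct.assoc k k k (AddMonoidAlgebra k Λ) (AddMonoidAlgebra k Λ) R)
          ((Algebra.TensorProduct.map (groupAlgComul k Λ) (AlgHom.id k R)) (μ f)))
    (hi : DirectSum.IsInternal (gradeOf μ)) (h1 : (1 : R) ∈ gradeOf μ 0)
    (hm : ∀ (χ χ' : Λ) (x y : R),
      x ∈ gradeOf μ χ → y ∈ gradeOf μ χ' → x * y ∈ gradeOf μ (χ + χ')) :
    coactOf (gradeOf μ) hi h1 hm = μ := by
  classical
  apply AlgHom.ext
  intro f
  have hsum : ∑ χ ∈ ((eqvN k Λ R) (μ f)).support, piComp μ χ f = f := by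
    have := sum_piComp μ hc f
    rw [Finsupp.sum] at this
    simpa only [piComp_apply] using this
  have hL : coactOf (gradeOf μ) hi h1 hm f
      = ∑ χ ∈ ((eqvN k Λ R) (μ f)).support,
          AddMonoidAlgebra.single χ (1:k) ⊗ₜ[k] piComp μ χ f := by
    conv_lhs => rw [← hsum]
    rw [map_sum]
    exact Finset.sum_congr rfl fun χ _ =>
      coactOf_of_mem (gradeOf μ) hi h1 hm (piComp_mem_gradeOf μ ha χ f)
  have hR : ∑ χ ∈ ((eqvN k Λ R) (μ f)).support,
          AddMonoidAlgebra.single χ (1:k) ⊗ₜ[k] piComp μ χ f = μ f := by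
    calc ∑ χ ∈ ((eqvN k Λ R) (μ f)).support,
            AddMonoidAlgebra.single χ (1:k) ⊗ₜ[k] piComp μ χ f
        = ∑ χ ∈ ((eqvN k Λ R) (μ f)).support,
            (eqvN k Λ R).symm (Finsupp.single χ (((eqvN k Λ R) (μ f)) χ)) :=
          Finset.sum_congr rfl fun χ _ => by
            rw [piComp_apply]; exact (eqvN_symm_single χ _).symm
      _ = (eqvN k Λ R).symm
            (∑ χ ∈ ((eqvN k Λ R) (μ f)).support, Finsupp.single χ (((eqvN k Λ R) (μ f)) χ)) :=
          (map_sum _ _ _).symm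
      _ = (eqvN k Λ R).symm ((eqvN k Λ R) (μ f)) := by
          rw [← Finsupp.sum, Finsupp.sum_single]
      _ = μ f := LinearEquiv.symm_apply_apply _ _
  rw [hL, hR]

end LeftInv
/-- Coactions of the group algebra `k[Λ]` on a commutative `k`-algebra `R` (i.e. `k`-algebra
homomorphisms `μ : R → k[Λ] ⊗ R` satisfying the counit and coassociativity laws) are in
bijection with `Λ`-gradings of `R`; under the bijection the graded piece of degree `χ` is
`{f ∈ R : μ(f) = λ_χ ⊗ f}`. -/
theorem statement5 (k : Type*) [Field k] (Λ : Type*) [AddCommGroup Λ] [AddGroup.FG Λ]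
    [DecidableEq Λ] (R : Type*) [CommRing R] [Algebra k R] :
    ∃ e :
      {μ : R →ₐ[k] (AddMonoidAlgebra k Λ ⊗[k] R) //
        (∀ f : R,
          (Algebra.TensorProduct.lid k R)
            ((Algebra.TensorProduct.map (groupAlgCounit k Λ) (AlgHom.id k R)) (μ f)) = f) ∧
        (∀ f : R,
          (Algebra.TensorProduct.map (AlgHom.id k (AddMonoidAlgebra k Λ)) μ) (μ f) =
            (Algebra.TensorProduct.assoc k k k (AddMonoidAlgebra k Λ) (AddMonoidAlgebra k Λ) R)
              ((Algebra.TensorProduct.map (groupAlgComul k Λ) (AlgHom.id k R)) (μ f)))} ≃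
      {ℬ : Λ → Submodule k R //
        DirectSum.IsInternal ℬ ∧ (1 : R) ∈ ℬ 0 ∧
        ∀ (χ χ' : Λ) (x y : R), x ∈ ℬ χ → y ∈ ℬ χ' → x * y ∈ ℬ (χ + χ')},
      ∀ μ (χ : Λ),
        ((e μ).1 χ : Set R) =
          {f : R | μ.1 f = AddMonoidAlgebra.single χ (1 : k) ⊗ₜ[k] f} := by
  classical
  refine ⟨{
    toFun := fun μ => ⟨gradeOf μ.1,
      gradeOf_isInternal μ.1 μ.2.1 μ.2.2, one_mem_gradeOf μ.1, mul_mem_gradeOf μ.1⟩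
    invFun := fun B => ⟨coactOf B.1 B.2.1 B.2.2.1 B.2.2.2,
      coactOf_counit B.1 B.2.1 B.2.2.1 B.2.2.2, coactOf_coassoc B.1 B.2.1 B.2.2.1 B.2.2.2⟩
    left_inv := fun μ => Subtype.ext (coactOf_gradeOf μ.1 μ.2.1 μ.2.2 _ _ _)
    right_inv := fun B => Subtype.ext (gradeOf_coactOf B.1 B.2.1 B.2.2.1 B.2.2.2) },
    fun μ χ => rfl⟩
end

section
/- Let k be a field, Λ a finitely generated abelian group, and R a commutative k-algebra of finite type equipped with a Λ-grading R = ⊕_{χ∈Λ} R_χ. Then for any fixed χ ∈ Λ, the k-submodule ⊕_{j∈ℕ} R_{jχ} (the span of the homogeneous components of degrees jχ for j ≥ 0) is a k-subalgebra of R and is a finitely generated k-algebra. -/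
open DirectSum

/-- Gordan-type lemma: a "full" additive submonoid of `ι → ℕ` is finitely generated. -/
lemma aux_gordan {ι : Type*} [Fintype ι] [DecidableEq ι] (N : AddSubmonoid (ι → ℕ))
    (hfull : ∀ a ∈ N, ∀ b ∈ N, b ≤ a → a - b ∈ N) : N.FG := by
  classical
  set S : Set (ι → ℕ) := {a | a ∈ N ∧ a ≠ 0} with hSdef
  set M : Set (ι → ℕ) := {a ∈ S | ∀ b ∈ S, ¬ b < a} with hMdef
  have hanti : IsAntichain (· ≤ ·) M := by
    intro a ha b hb hne hle
    exact hb.2 a ha.1 (lt_of_le_of_ne hle hne)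
  haveI hwo : IsWellOrder ℕ (· < ·) := inferInstance
  have hfin : M.Finite :=
    hanti.finite_of_partiallyWellOrderedOn (Set.isPWO_of_wellQuasiOrderedLE M)
  have key : ∀ d (a : ι → ℕ), a ∈ N → (∑ i, a i) ≤ d → a ∈ AddSubmonoid.closure M := by
    intro d
    induction d with
    | zero =>
      intro a haN hd
      have ha0 : a = 0 := by
        funext i
        have h1 : a i ≤ ∑ j, a j := Finset.single_le_sum (fun _ _ => Nat.zero_le _)
          (Finset.mem_univ i)
        have h2 : a i = 0 := by omega
        simp [h2]
      rw [ha0]; exact zero_mem _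
    | succ d ih =>
      intro a haN hd
      by_cases ha0 : a = 0
      · rw [ha0]; exact zero_mem _
      have haS : a ∈ S := ⟨haN, ha0⟩
      set T : Set (ι → ℕ) := {b ∈ S | b ≤ a} with hTdef
      have hTfin : T.Finite := (Set.finite_Icc (0 : ι → ℕ) a).subset
        (fun b hb => Set.mem_Icc.2 ⟨fun i => Nat.zero_le _, hb.2⟩)
      obtain ⟨m, hmT, hmin⟩ : ∃ m ∈ T, ∀ b ∈ T, b ≤ m → m = b := by
        obtain ⟨m, hm⟩ := hTfin.exists_minimal ⟨a, haS, le_refl a⟩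
        exact ⟨m, hm.1, fun b hb hbm => (hm.eq_of_le hb hbm).symm⟩
      have hmM : m ∈ M := by
        refine ⟨hmT.1, fun b hbS hblt => ?_⟩
        have hbT : b ∈ T := ⟨hbS, hblt.le.trans hmT.2⟩
        exact absurd (hmin b hbT hblt.le) (ne_of_gt hblt)
      have hsub : a - m ∈ N := hfull a haN m hmT.1.1 hmT.2
      have hcanc : a - m + m = a := by
        funext i
        exact Nat.sub_add_cancel (hmT.2 i)
      have hm0 : m ≠ 0 := hmT.1.2
      have hmpos : 0 < ∑ i, m i := by
        rcases Function.ne_iff.1 hm0 with ⟨i, hi⟩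
        exact Finset.sum_pos' (fun _ _ => Nat.zero_le _)
          ⟨i, Finset.mem_univ i, Nat.pos_of_ne_zero hi⟩
      have hdeg : ∑ i, (a - m) i ≤ d := by
        have hsum : ∑ i, (a - m) i + ∑ i, m i = ∑ i, a i := by
          rw [← Finset.sum_add_distrib]
          exact Finset.sum_congr rfl fun i _ => Nat.sub_add_cancel (hmT.2 i)
        omega
      have := AddSubmonoid.add_mem _ (ih (a - m) hsub hdeg)
        (AddSubmonoid.subset_closure hmM)
      rwa [hcanc] at this
  refine ⟨hfin.toFinset, le_antisymm ?_ ?_⟩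
  · rw [AddSubmonoid.closure_le]
    intro a ha
    rw [Set.Finite.coe_toFinset] at ha
    exact ha.1.1
  · intro a ha
    have := key (∑ i, a i) a ha (le_refl _)
    rwa [Set.Finite.coe_toFinset]

/-- Let `R` be a finitely generated commutative algebra over a field `k`, graded by a finitely
generated abelian group `Λ`.  For any fixed `χ ∈ Λ`, the `k`-submodule `⊕_{j∈ℕ} R_{jχ}` is a
`k`-subalgebra of `R` and is a finitely generated `k`-algebra. -/
theorem statement6 (k : Type*) [Field k] (Λ : Type*) [AddCommGroup Λ] [AddGroup.FG Λ]
    [DecidableEq Λ] (R : Type*) [CommRing R] [Algebra k R]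
    (hfg : Algebra.FiniteType k R)
    (ℬ : Λ → Submodule k R) (hdirect : DirectSum.IsInternal ℬ)
    (hone : (1 : R) ∈ ℬ 0)
    (hmul : ∀ (χ χ' : Λ) (x y : R), x ∈ ℬ χ → y ∈ ℬ χ' → x * y ∈ ℬ (χ + χ'))
    (χ : Λ) :
    ∃ A : Subalgebra k R,
      Subalgebra.toSubmodule A = (⨆ j : ℕ, ℬ (j • χ)) ∧ Algebra.FiniteType k A := by
  classical
  haveI : DirectSum.Decomposition ℬ := hdirect.chooseDecomposition
  obtain ⟨s, hs⟩ := hfg.out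
  -- homogeneous generators
  let F : Finset (R × Λ) := s.biUnion fun y =>
    (DFinsupp.support (DirectSum.decompose ℬ y)).image fun lam =>
      (((DirectSum.decompose ℬ y) lam : R), lam)
  let ι := {p : R × Λ // p ∈ F}
  haveI : Fintype ι := FinsetCoe.fintype F
  let x : ι → R := fun i => i.1.1
  let deg : ι → Λ := fun i => i.1.2
  have hxdeg : ∀ i, x i ∈ ℬ (deg i) := by
    rintro ⟨⟨r, lam⟩, hp⟩
    simp only [F, Finset.mem_biUnion, Finset.mem_image] at hp
    obtain ⟨y, hy, μ, hμ, heq⟩ := hp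
    obtain ⟨h1, h2⟩ := Prod.mk.injEq .. ▸ heq
    subst h2
    simp only [x, deg]
    rw [← h1]
    exact SetLike.coe_mem _
  have hadj : Algebra.adjoin k (Set.range x) = ⊤ := by
    rw [eq_top_iff, ← hs]
    rw [Algebra.adjoin_le_iff]
    intro y hy
    rw [← DirectSum.sum_support_decompose ℬ y]
    refine Subalgebra.sum_mem _ fun lam hlam => Algebra.subset_adjoin ?_
    exact ⟨⟨((((DirectSum.decompose ℬ y) lam : R)), lam),
      Finset.mem_biUnion.2 ⟨y, hy, Finset.mem_image.2 ⟨lam, hlam, rfl⟩⟩⟩, rfl⟩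
  -- monomials
  let mono : (ι → ℕ) → R := fun a => ∏ i, x i ^ a i
  let D : (ι → ℕ) → Λ := fun a => ∑ i, a i • deg i
  have hpow : ∀ (i : ι) (n : ℕ), x i ^ n ∈ ℬ (n • deg i) := by
    intro i n
    induction n with
    | zero => simpa using hone
    | succ n ihn =>
      rw [pow_succ, succ_nsmul]
      exact hmul _ _ _ _ ihn (hxdeg i)
  have hmono_mem : ∀ a, mono a ∈ ℬ (D a) := by
    intro a
    have : ∀ t : Finset ι, (∏ i ∈ t, x i ^ a i) ∈ ℬ (∑ i ∈ t, a i • deg i) := by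
      intro t
      induction t using Finset.induction with
      | empty => simpa using hone
      | insert _ _ h ih =>
        rw [Finset.prod_insert h, Finset.sum_insert h]
        exact hmul _ _ _ _ (hpow _ _) ih
    exact this Finset.univ
  have hmono_add : ∀ a b, mono (a + b) = mono a * mono b := by
    intro a b
    simp only [mono, Pi.add_apply, pow_add]
    rw [Finset.prod_mul_distrib]
  -- the monoid of exponents
  let κ := Option ι
  let ψ : (κ → ℕ) →+ Λ :=
    { toFun := fun a => (∑ i : ι, a (some i) • deg i) - a none • χ
      map_zero' := by simp
      map_add' := fun a b => by
        simp only [Pi.add_apply, add_nsmul, Finset.sum_add_distrib]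
        abel }
  let N : AddSubmonoid (κ → ℕ) := AddSubmonoid.comap ψ ⊥
  have hNmem : ∀ a, a ∈ N ↔ ψ a = 0 := fun a => by
    simp [N, AddSubmonoid.mem_comap, AddSubmonoid.mem_bot]
  have hNfull : ∀ a ∈ N, ∀ b ∈ N, b ≤ a → a - b ∈ N := by
    intro a ha b hb hba
    rw [hNmem] at ha hb ⊢
    have hcanc : a - b + b = a := by
      funext i
      exact Nat.sub_add_cancel (hba i)
    have := map_add ψ (a - b) b
    rw [hcanc, ha, hb, add_zero] at this
    exact this.symm
  obtain ⟨G, hG⟩ := aux_gordan N hNfull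
  -- generators
  let gens : Set R := (fun g : κ → ℕ => mono (fun i => g (some i))) '' ↑G
  have hgensfin : gens.Finite := G.finite_toSet.image _
  -- the target submodule is a subalgebra
  have h1mem : (1 : R) ∈ ⨆ j : ℕ, ℬ (j • χ) :=
    Submodule.mem_iSup_of_mem 0 (by simpa using hone)
  have hmulclosed : ∀ u v : R, u ∈ (⨆ j : ℕ, ℬ (j • χ)) → v ∈ (⨆ j : ℕ, ℬ (j • χ)) →
      u * v ∈ (⨆ j : ℕ, ℬ (j • χ)) := by
    intro u v hu hv
    refine Submodule.iSup_induction (motive := fun u => u * v ∈ ⨆ j : ℕ, ℬ (j • χ)) _ hu ?_ ?_ ?_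
    · intro j u hju
      refine Submodule.iSup_induction (motive := fun v => u * v ∈ ⨆ j : ℕ, ℬ (j • χ)) _ hv ?_ ?_ ?_
      · intro l v hlv
        refine Submodule.mem_iSup_of_mem (j + l) ?_
        rw [add_nsmul]
        exact hmul _ _ _ _ hju hlv
      · show u * 0 ∈ (⨆ j : ℕ, ℬ (j • χ))
        rw [mul_zero]; exact zero_mem _
      · intro y z hy hz
        show u * (y + z) ∈ (⨆ j : ℕ, ℬ (j • χ))
        rw [mul_add]; exact add_mem hy hz
    · show (0 : R) * v ∈ (⨆ j : ℕ, ℬ (j • χ))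
      rw [zero_mul]; exact zero_mem _
    · intro y z hy hz
      show (y + z) * v ∈ (⨆ j : ℕ, ℬ (j • χ))
      rw [add_mul]; exact add_mem hy hz
  let A : Subalgebra k R := (⨆ j : ℕ, ℬ (j • χ)).toSubalgebra h1mem hmulclosed
  -- monomials coming from N lie in the adjoin of gens
  have hNadj : ∀ a ∈ N, mono (fun i => a (some i)) ∈ Algebra.adjoin k gens := by
    intro a ha
    rw [← hG] at ha
    induction ha using AddSubmonoid.closure_induction with
    | mem g hg => exact Algebra.subset_adjoin ⟨g, hg, rfl⟩
    | zero => simpa [mono] using (Algebra.adjoin k gens).one_mem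
    | add a b _ _ iha ihb =>
      have heq : (fun i => (a + b) (some i)) =
          (fun i => a (some i)) + (fun i => b (some i)) := rfl
      rw [heq, hmono_add]
      exact mul_mem iha ihb
  -- the monomials span R
  have hspan : Submodule.span k (Set.range mono) = ⊤ := by
    rw [eq_top_iff]
    intro r _
    have hr : r ∈ Algebra.adjoin k (Set.range x) := by rw [hadj]; trivial
    rw [← Subalgebra.mem_toSubmodule, Algebra.adjoin_eq_span] at hr
    have hsub : (Submonoid.closure (Set.range x) : Set R) ⊆ Set.range mono := by
      intro r hr
      induction hr using Submonoid.closure_induction with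
      | mem y hy =>
        obtain ⟨i, rfl⟩ := hy
        refine ⟨Pi.single i 1, ?_⟩
        simp only [mono]
        rw [Finset.prod_eq_single i (fun b _ hb => by
          rw [Pi.single_eq_of_ne hb, pow_zero]) (fun h => absurd (Finset.mem_univ i) h)]
        rw [Pi.single_eq_same, pow_one]
      | one => exact ⟨0, by simp [mono]⟩
      | mul a b _ _ iha ihb =>
        obtain ⟨u, rfl⟩ := iha
        obtain ⟨v, rfl⟩ := ihb
        exact ⟨u + v, hmono_add u v⟩
    exact Submodule.span_mono hsub hr
  -- projection maps
  let P : Λ → R →ₗ[k] R := fun lam =>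
    { toFun := fun r => ((DirectSum.decompose ℬ r) lam : R)
      map_add' := fun u v => by
        simp [DirectSum.decompose_add]
      map_smul' := fun c v => by
        simp [DirectSum.decompose_smul, DirectSum.smul_apply] }
  have hA_adjoin : A = Algebra.adjoin k gens := by
    refine le_antisymm ?_ (Algebra.adjoin_le ?_)
    · -- A ≤ adjoin gens
      intro r hr
      have hr' : r ∈ (⨆ j : ℕ, ℬ (j • χ)) := hr
      refine Submodule.iSup_induction (motive := fun r => r ∈ Algebra.adjoin k gens) _ hr' ?_
        (zero_mem _) (fun y z hy hz => add_mem hy hz)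
      intro j r hrj
      -- r ∈ ℬ (j • χ) implies r ∈ adjoin gens via the projection argument
      have hr1 : P (j • χ) r = r := DirectSum.decompose_of_mem_same ℬ hrj
      have hmem : P (j • χ) r ∈ Submodule.map (P (j • χ))
          (Submodule.span k (Set.range mono)) := by
        rw [hspan]
        exact ⟨r, trivial, rfl⟩
      rw [Submodule.map_span] at hmem
      have himg : P (j • χ) '' Set.range mono ⊆
          ↑(Subalgebra.toSubmodule (Algebra.adjoin k gens)) := by
        rintro _ ⟨_, ⟨a, rfl⟩, rfl⟩
        by_cases hD : D a = j • χ
        · have hval : P (j • χ) (mono a) = mono a := by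
            have := DirectSum.decompose_of_mem_same ℬ (hmono_mem a)
            simpa [P, hD] using hD ▸ this
          rw [hval]
          -- extend a to an element of N
          let ahat : κ → ℕ := fun o => Option.rec j a o
          have haN : ahat ∈ N := by
            rw [hNmem]
            show (∑ i : ι, ahat (some i) • deg i) - ahat none • χ = 0
            have : (∑ i : ι, ahat (some i) • deg i) = D a := rfl
            rw [this, hD]
            show j • χ - j • χ = 0
            simp
          have := hNadj ahat haN
          exact this
        · have hval : P (j • χ) (mono a) = 0 := by
            simpa [P] using DirectSum.decompose_of_mem_ne ℬ (hmono_mem a) hD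
          rw [hval]
          exact zero_mem _
      have := Submodule.span_le.2 himg hmem
      rwa [hr1] at this
    · -- gens ⊆ A
      rintro _ ⟨g, hg, rfl⟩
      have hgN : g ∈ N := hG ▸ AddSubmonoid.subset_closure hg
      rw [hNmem] at hgN
      have hdeg : D (fun i => g (some i)) = g none • χ := by
        have : (∑ i : ι, g (some i) • deg i) - g none • χ = 0 := hgN
        have h2 : (∑ i : ι, g (some i) • deg i) = g none • χ := by
          rwa [sub_eq_zero] at this
        exact h2
      show mono (fun i => g (some i)) ∈ (⨆ j : ℕ, ℬ (j • χ))
      refine Submodule.mem_iSup_of_mem (g none) ?_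
      rw [← hdeg]
      exact hmono_mem _
  refine ⟨A, Submodule.toSubalgebra_toSubmodule _ _ _, ?_⟩
  rw [← Subalgebra.fg_iff_finiteType]
  exact ⟨hgensfin.toFinset, by rw [Set.Finite.coe_toFinset, ← hA_adjoin]⟩
end

section
/- Let k be a field, Λ a finitely generated abelian group, and R a commutative k-algebra of finite type equipped with a Λ-grading R = ⊕_{χ∈Λ} R_χ. Then the degree-zero component R₀ is a finitely generated k-algebra. -/
open DirectSum


/-- Dickson's lemma for `ι → ℕ`. -/
lemma pi_nat_isPWO {ι : Type*} [Fintype ι] (s : Set (ι → ℕ)) : s.IsPWO :=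
  Set.isPWO_of_wellQuasiOrderedLE s

/-- A Gordan-type lemma: the solution monoid of `σ a = 0` in `ι → ℕ` is generated by
finitely many solutions. -/
lemma gordan_aux {ι : Type*} [Fintype ι] {Λ : Type*} [AddCommGroup Λ]
    (σ : (ι → ℕ) →+ Λ) :
    ∃ G : Finset (ι → ℕ), (∀ g ∈ G, σ g = 0) ∧
      ∀ a : ι → ℕ, σ a = 0 → a ∈ AddSubmonoid.closure (G : Set (ι → ℕ)) := by
  classical
  set S : Set (ι → ℕ) := {a | σ a = 0 ∧ a ≠ 0} with hS
  set Min : Set (ι → ℕ) := {a | a ∈ S ∧ ∀ b ∈ S, b ≤ a → b = a} with hMinDef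
  have hanti : IsAntichain (· ≤ ·) Min := by
    intro a ha b hb hne hle
    exact hne (hb.2 a ha.1 hle)
  have hfin : Min.Finite := hanti.finite_of_partiallyWellOrderedOn (pi_nat_isPWO Min)
  refine ⟨hfin.toFinset, ?_, ?_⟩
  · intro g hg
    exact ((hfin.mem_toFinset.mp hg).1).1
  · have key : ∀ N : ℕ, ∀ a : ι → ℕ, (∑ i, a i) ≤ N → σ a = 0 →
        a ∈ AddSubmonoid.closure (hfin.toFinset : Set (ι → ℕ)) := by
      intro N
      induction N with
      | zero =>
        intro a hsum _
        have : a = 0 := by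
          funext i
          have := Finset.sum_eq_zero_iff.mp (Nat.le_zero.mp hsum) i (Finset.mem_univ i)
          simpa using this
        rw [this]; exact zero_mem _
      | succ N ih =>
        intro a hsum ha
        by_cases h0 : a = 0
        · rw [h0]; exact zero_mem _
        · -- find a minimal element of S below a
          set sA : Set (ι → ℕ) := {b | b ∈ S ∧ b ≤ a} with hsA
          have hwf : sA.IsWF := (pi_nat_isPWO sA).isWF
          have hne : sA.Nonempty := ⟨a, ⟨ha, h0⟩, le_rfl⟩
          set m : ι → ℕ := hwf.min hne with hm
          have hmmem : m ∈ sA := hwf.min_mem hne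
          have hmin : m ∈ Min := by
            refine ⟨hmmem.1, ?_⟩
            intro b hb hble
            by_contra hbne
            exact hwf.not_lt_min hne ⟨hb, hble.trans hmmem.2⟩ (lt_of_le_of_ne hble hbne)
          have hmle : m ≤ a := hmmem.2
          have hsub : (a - m) + m = a := tsub_add_cancel_of_le hmle
          have hσsub : σ (a - m) = 0 := by
            have := map_add σ (a - m) m
            rw [hsub, ha, hmmem.1.1, add_zero] at this
            exact this.symm
          have hmpos : 0 < ∑ i, m i := by
            rcases Function.ne_iff.mp hmmem.1.2 with ⟨i, hi⟩
            exact Finset.sum_pos' (fun _ _ => Nat.zero_le _)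
              ⟨i, Finset.mem_univ i, Nat.pos_of_ne_zero hi⟩
          have hsum' : (∑ i, (a - m) i) ≤ N := by
            have : (∑ i, (a - m) i) + (∑ i, m i) = ∑ i, a i := by
              rw [← Finset.sum_add_distrib]
              exact Finset.sum_congr rfl fun i _ => by
                have : (a - m) i + m i = a i := congrFun hsub i
                simpa using this
            omega
          have h1 := ih (a - m) hsum' hσsub
          have h2 : m ∈ AddSubmonoid.closure (hfin.toFinset : Set (ι → ℕ)) :=
            AddSubmonoid.subset_closure (by rwa [Set.Finite.coe_toFinset])
          have := add_mem h1 h2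
          rwa [hsub] at this
    intro a ha
    exact key (∑ i, a i) a le_rfl ha

/-- Let `R` be a finitely generated commutative algebra over a field `k`, graded by a finitely
generated abelian group `Λ`.  Then the degree-zero component `R₀` is a `k`-subalgebra of `R`
and is a finitely generated `k`-algebra. -/
theorem statement7 (k : Type*) [Field k] (Λ : Type*) [AddCommGroup Λ] [AddGroup.FG Λ]
    [DecidableEq Λ] (R : Type*) [CommRing R] [Algebra k R]
    (hfg : Algebra.FiniteType k R)
    (ℬ : Λ → Submodule k R) (hdirect : DirectSum.IsInternal ℬ)
    (hone : (1 : R) ∈ ℬ 0)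
    (hmul : ∀ (χ χ' : Λ) (x y : R), x ∈ ℬ χ → y ∈ ℬ χ' → x * y ∈ ℬ (χ + χ')) :
    ∃ A : Subalgebra k R,
      Subalgebra.toSubmodule A = ℬ 0 ∧ Algebra.FiniteType k A := by
  classical
  haveI gm : SetLike.GradedMonoid ℬ :=
    { one_mem := hone
      mul_mem := fun {i j} {gi gj} hi hj => hmul i j gi gj hi hj }
  letI := hdirect.chooseDecomposition
  -- the degree-zero subalgebra
  set A : Subalgebra k R :=
    { carrier := ℬ 0
      one_mem' := hone
      mul_mem' := fun {x y} hx hy => by simpa using hmul 0 0 x y hx hy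
      add_mem' := fun hx hy => add_mem hx hy
      zero_mem' := zero_mem _
      algebraMap_mem' := fun c => by
        rw [Algebra.algebraMap_eq_smul_one]
        exact Submodule.smul_mem _ c hone } with hA
  have hAsub : Subalgebra.toSubmodule A = ℬ 0 := by
    ext x; exact Iff.rfl
  refine ⟨A, hAsub, ?_⟩
  rw [← Subalgebra.fg_iff_finiteType]
  -- homogeneous generators
  obtain ⟨s, hs⟩ := hfg.out
  set s' : Finset R := s.biUnion
    (fun y => (DirectSum.decompose ℬ y).support.image
      (fun χ => (DirectSum.decompose ℬ y χ : R))) with hs'def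
  have h1 : ∀ z ∈ s', ∃ χ : Λ, z ∈ ℬ χ := by
    intro z hz
    rw [hs'def, Finset.mem_biUnion] at hz
    obtain ⟨y, hy, hz⟩ := hz
    rw [Finset.mem_image] at hz
    obtain ⟨χ, hχ, rfl⟩ := hz
    exact ⟨χ, (DirectSum.decompose ℬ y χ).2⟩
  have hadj : Algebra.adjoin k (s' : Set R) = ⊤ := by
    rw [← top_le_iff, ← hs]
    apply Algebra.adjoin_le
    intro y hy
    rw [← DirectSum.sum_support_decompose ℬ y]
    apply Subalgebra.sum_mem
    intro χ hχ
    apply Algebra.subset_adjoin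
    rw [hs'def]
    exact Finset.mem_coe.mpr (Finset.mem_biUnion.mpr
      ⟨y, hy, Finset.mem_image.mpr ⟨χ, hχ, rfl⟩⟩)
  -- degrees and monomials
  set ι : Type _ := {z : R // z ∈ s'} with hι
  have hdeg' : ∀ i : ι, ∃ χ : Λ, (i : R) ∈ ℬ χ := fun i => h1 i i.2
  set deg : ι → Λ := fun i => (hdeg' i).choose with hdeg'def
  have hdeg : ∀ i : ι, (i : R) ∈ ℬ (deg i) := fun i => (hdeg' i).choose_spec
  set σ : (ι → ℕ) →+ Λ :=
    { toFun := fun a => ∑ i, a i • deg i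
      map_zero' := by simp
      map_add' := fun a b => by
        simp [add_smul, Finset.sum_add_distrib] } with hσdef
  have hσ : ∀ a : ι → ℕ, σ a = ∑ i, a i • deg i := fun _ => rfl
  set mon : (ι → ℕ) → R := fun a => ∏ i : ι, (i.1 : R) ^ a i with hmondef
  have hmon_deg : ∀ a : ι → ℕ, mon a ∈ ℬ (σ a) := by
    intro a
    rw [hσ]
    exact SetLike.prod_pow_mem_graded ℬ deg _ a (fun i _ => hdeg i)
  have hmon_zero : mon 0 = 1 := by simp [hmondef]
  have hmon_add : ∀ a b : ι → ℕ, mon (a + b) = mon a * mon b := by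
    intro a b
    simp [hmondef, pow_add, Finset.prod_mul_distrib]
  -- every element of `R` lies in the span of the monomials
  have hsingle : ∀ i : ι, mon (Pi.single i 1) = (i : R) := by
    intro i
    show ∏ j : ι, (j.1 : R) ^ (Pi.single i 1 : ι → ℕ) j = (i.1 : R)
    rw [Finset.prod_eq_single i]
    · simp
    · intro j _ hj
      simp [Pi.single_eq_of_ne hj]
    · simp
  have hrange : (Submonoid.closure (s' : Set R) : Set R) ⊆ Set.range mon := by
    intro z hz
    induction hz using Submonoid.closure_induction with
    | mem x hx => exact ⟨Pi.single (⟨x, hx⟩ : ι) 1, hsingle _⟩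
    | one => exact ⟨0, hmon_zero⟩
    | mul x y _ _ hx hy =>
      obtain ⟨a, rfl⟩ := hx
      obtain ⟨b, rfl⟩ := hy
      exact ⟨a + b, hmon_add a b⟩
  have hspanR : ∀ r : R, r ∈ Submodule.span k (Set.range mon) := by
    intro r
    have h2 : r ∈ Subalgebra.toSubmodule (Algebra.adjoin k (s' : Set R)) := by
      rw [hadj]; exact Algebra.mem_top (R := k)
    rw [Algebra.adjoin_eq_span] at h2
    exact Submodule.span_mono hrange h2
  -- the degree-zero projection
  set π₀ : R →ₗ[k] R :=
    { toFun := fun r => (DirectSum.decompose ℬ r 0 : R)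
      map_add' := fun x y => by
        show ((DirectSum.decompose ℬ (x + y) 0 : R)) =
          (DirectSum.decompose ℬ x 0 : R) + (DirectSum.decompose ℬ y 0 : R)
        rw [DirectSum.decompose_add]
        rfl
      map_smul' := fun c x => by
        show ((DirectSum.decompose ℬ (c • x) 0 : R)) = c • (DirectSum.decompose ℬ x 0 : R)
        rw [DirectSum.decompose_smul]
        rfl } with hπdef
  have hπ : ∀ r : R, π₀ r = (DirectSum.decompose ℬ r 0 : R) := fun _ => rfl
  -- the degree-zero part is spanned by degree-zero monomials
  set T : Set (ι → ℕ) := {a | σ a = 0} with hTdef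
  have hB0span : (ℬ 0 : Set R) ⊆ (Submodule.span k (mon '' T) : Set R) := by
    intro r hr
    have h2 : π₀ r = r := DirectSum.decompose_of_mem_same ℬ hr
    have h3 : Submodule.span k (Set.range mon) ≤
        (Submodule.span k (mon '' T)).comap π₀ := by
      rw [Submodule.span_le]
      rintro _ ⟨a, rfl⟩
      show π₀ (mon a) ∈ Submodule.span k (mon '' T)
      by_cases ha : σ a = 0
      · have h4 : π₀ (mon a) = mon a := by
          rw [hπ]
          exact DirectSum.decompose_of_mem_same ℬ (ha ▸ hmon_deg a)
        rw [h4]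
        exact Submodule.subset_span ⟨a, ha, rfl⟩
      · have h4 : π₀ (mon a) = 0 := by
          rw [hπ]
          exact DirectSum.decompose_of_mem_ne ℬ (hmon_deg a) ha
        rw [h4]
        exact zero_mem _
    have := h3 (hspanR r)
    rwa [Submodule.mem_comap, h2] at this
  -- Gordan's lemma
  obtain ⟨G, hG1, hG2⟩ := gordan_aux σ
  refine ⟨G.image mon, le_antisymm ?_ ?_⟩
  · apply Algebra.adjoin_le
    intro z hz
    rw [Finset.coe_image, Set.mem_image] at hz
    obtain ⟨g, hg, rfl⟩ := hz
    rw [Finset.mem_coe] at hg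
    show mon g ∈ ℬ 0
    have := hmon_deg g
    rwa [hG1 g hg] at this
  · intro x hx
    have hx0 : x ∈ (ℬ 0 : Set R) := hx
    have h5 : (mon '' T : Set R) ⊆
        (Subalgebra.toSubmodule (Algebra.adjoin k ((G.image mon : Finset R) : Set R)) : Set R) := by
      rintro _ ⟨a, ha, rfl⟩
      have haG : a ∈ AddSubmonoid.closure (G : Set (ι → ℕ)) := hG2 a ha
      clear ha
      show mon a ∈ Algebra.adjoin k ((G.image mon : Finset R) : Set R)
      induction haG using AddSubmonoid.closure_induction with
      | mem b hb =>
        exact Algebra.subset_adjoin (by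
          rw [Finset.coe_image]
          exact Set.mem_image_of_mem mon (Finset.mem_coe.mpr hb))
      | zero =>
        rw [hmon_zero]
        exact Subalgebra.one_mem _
      | add b c _ _ hbmem hcmem =>
        rw [hmon_add]
        exact Subalgebra.mul_mem _ hbmem hcmem
    have := Submodule.span_le.mpr h5 (hB0span hx0)
    exact this
end

section
/- Let k be a field and π : ℤⁿ → ℤ^d a group homomorphism. Let ψ : k[x₁,…,xₙ] → k[ℤ^d] be the k-algebra homomorphism to the monoid algebra of ℤ^d (Laurent polynomials in d variables) sending xᵢ to the monomial t^{π(eᵢ)}, where e₁,…,eₙ is the standard basis of ℤⁿ. Then the kernel of ψ equals the ideal of k[x₁,…,xₙ] generated by the binomials x^u − x^v for u, v ∈ ℕⁿ with π(u) = π(v), and this kernel is a prime ideal. -/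
open MvPolynomial AddMonoidAlgebra


/-- The `k`-algebra homomorphism `ψ : k[x₁,…,xₙ] → k[ℤ^d]` sending `xᵢ` to the (Laurent)
monomial `t^{π(eᵢ)}` associated to a lattice map `π : ℤⁿ → ℤ^d`. -/
noncomputable def toricCharMap (k : Type*) [Field k] (n d : ℕ)
    (π : (Fin n → ℤ) →+ (Fin d → ℤ)) :
    MvPolynomial (Fin n) k →ₐ[k] AddMonoidAlgebra k (Fin d → ℤ) :=
  MvPolynomial.aeval fun i => AddMonoidAlgebra.single (π (Pi.single i 1)) (1 : k)

/-- The additive monoid hom `ℕⁿ → ℤ^d` induced by `π`. -/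
def ToricAux.sigmaHom (n d : ℕ) (π : (Fin n → ℤ) →+ (Fin d → ℤ)) :
    (Fin n →₀ ℕ) →+ (Fin d → ℤ) where
  toFun u := π (fun i => (u i : ℤ))
  map_zero' := by convert map_zero π using 2; funext i; simp
  map_add' u v := by
    show π _ = _
    rw [← map_add]
    congr 1

namespace ToricAux

variable (k : Type*) [Field k] (n d : ℕ) (π : (Fin n → ℤ) →+ (Fin d → ℤ))

lemma toric_eq : (toricCharMap k n d π) =
    (AddMonoidAlgebra.mapDomainAlgHom k k (sigmaHom n d π) :
      AddMonoidAlgebra k (Fin n →₀ ℕ) →ₐ[k] AddMonoidAlgebra k (Fin d → ℤ)) := by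
  apply MvPolynomial.algHom_ext
  intro i
  have h1 : toricCharMap k n d π (X i) = AddMonoidAlgebra.single (π (Pi.single i 1)) (1 : k) :=
    MvPolynomial.aeval_X _ i
  have h2 : (AddMonoidAlgebra.mapDomainAlgHom k k (sigmaHom n d π))
      ((X i : MvPolynomial (Fin n) k) : AddMonoidAlgebra k (Fin n →₀ ℕ)) =
      AddMonoidAlgebra.single (sigmaHom n d π (Finsupp.single i 1)) (1 : k) := by
    show AddMonoidAlgebra.mapDomain _ _ = _
    rw [show (X i : MvPolynomial (Fin n) k) =
        AddMonoidAlgebra.single (Finsupp.single i 1) (1 : k) from rfl,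
      AddMonoidAlgebra.mapDomain_single]
  have h3 : π (Pi.single i 1) = sigmaHom n d π (Finsupp.single i 1) := by
    show _ = π _
    congr 1
    funext j
    by_cases h : j = i
    · subst h; simp
    · simp [Finsupp.single_apply, Pi.single_apply, h, Ne.symm h]
  exact h1.trans ((congrArg (fun a => AddMonoidAlgebra.single a (1 : k)) h3).trans h2.symm)

lemma key (u : Fin n →₀ ℕ) (c : k) :
    toricCharMap k n d π (monomial u c) = AddMonoidAlgebra.single (sigmaHom n d π u) c := by
  rw [toric_eq]
  show AddMonoidAlgebra.mapDomain _ _ = _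
  rw [show (monomial u c : MvPolynomial (Fin n) k) = AddMonoidAlgebra.single u c from rfl,
    AddMonoidAlgebra.mapDomain_single]

end ToricAux

open ToricAux in
/-- The kernel of the monomial map `ψ : k[x₁,…,xₙ] → k[ℤ^d]`, `xᵢ ↦ t^{π(eᵢ)}`, equals the ideal
generated by the binomials `x^u − x^v` for `u, v ∈ ℕⁿ` with `π(u) = π(v)`, and this kernel is a
prime ideal (the toric ideal of the lattice map `π`). -/
theorem statement9 (k : Type*) [Field k] (n d : ℕ) (π : (Fin n → ℤ) →+ (Fin d → ℤ)) :
    RingHom.ker (toricCharMap k n d π) =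
        Ideal.span {f : MvPolynomial (Fin n) k |
          ∃ u v : Fin n →₀ ℕ,
            π (fun i => (u i : ℤ)) = π (fun i => (v i : ℤ)) ∧
            f = MvPolynomial.monomial u (1 : k) - MvPolynomial.monomial v (1 : k)} ∧
      (RingHom.ker (toricCharMap k n d π)).IsPrime := by
  set I := Ideal.span {f : MvPolynomial (Fin n) k |
          ∃ u v : Fin n →₀ ℕ,
            π (fun i => (u i : ℤ)) = π (fun i => (v i : ℤ)) ∧
            f = MvPolynomial.monomial u (1 : k) - MvPolynomial.monomial v (1 : k)} with hI
  constructor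
  · apply le_antisymm
    · -- ker ≤ I
      intro f hf
      rw [RingHom.mem_ker] at hf
      set mk := Ideal.Quotient.mkₐ k I with hmk
      have mono_eq : ∀ u v : Fin n →₀ ℕ, sigmaHom n d π u = sigmaHom n d π v →
          mk (monomial u (1 : k)) = mk (monomial v (1 : k)) := by
        intro u v h
        rw [Ideal.Quotient.mkₐ_eq_mk, Ideal.Quotient.eq]
        exact Ideal.subset_span ⟨u, v, h, rfl⟩
      classical
      set g : (Fin d → ℤ) → (MvPolynomial (Fin n) k ⧸ I) := fun a =>
        if h : ∃ u : Fin n →₀ ℕ, sigmaHom n d π u = a then mk (monomial h.choose 1) else 0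
        with hg
      set s := Finsupp.linearCombination k g with hs
      have claim : ∀ f : MvPolynomial (Fin n) k, s (toricCharMap k n d π f).coeff = mk f := by
        intro f
        induction f using MvPolynomial.induction_on' with
        | monomial u c =>
          rw [key, hs]
          have hex : ∃ u' : Fin n →₀ ℕ, sigmaHom n d π u' = sigmaHom n d π u := ⟨u, rfl⟩
          have : s (AddMonoidAlgebra.single (sigmaHom n d π u) c).coeff = c • g (sigmaHom n d π u) :=
            Finsupp.linearCombination_single k _ _
          rw [this, hg]
          simp only [dif_pos hex]
          rw [mono_eq _ _ hex.choose_spec, ← map_smul, MvPolynomial.smul_monomial, smul_eq_mul,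
            mul_one]
        | add p q hp hq => rw [map_add, AddMonoidAlgebra.coeff_add, map_add, map_add, hp, hq]
      have := claim f
      rw [hf, AddMonoidAlgebra.coeff_zero, map_zero] at this
      exact (Ideal.Quotient.eq_zero_iff_mem).mp this.symm
    · -- I ≤ ker
      rw [hI, Ideal.span_le]
      rintro f ⟨u, v, h, rfl⟩
      rw [SetLike.mem_coe, RingHom.mem_ker, map_sub, key, key]
      have : sigmaHom n d π u = sigmaHom n d π v := h
      rw [this, sub_self]
  · haveI : IsDomain (AddMonoidAlgebra k (Fin d → ℤ)) := {}
    exact RingHom.ker_isPrime _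
end

section
/- Let r > a ≥ 1 be coprime integers, and let b₁,…,b_t be the unique integers with bᵢ ≥ 2 for all i such that r/(r−a) = b₁ − 1/(b₂ − 1/(⋯ − 1/b_t)) (the Jung–Hirzebruch continued fraction expansion of r/(r−a)). Define lattice vectors u₀ = (r,0), u₁ = (r−a,1), and u_{i+1} = bᵢ·uᵢ − u_{i−1} for 1 ≤ i ≤ t. Then each uᵢ lies in the monoid S = { (m,n) ∈ ℕ² : m + a·n ≡ 0 (mod r) }, and S is generated as a monoid by {u₀, u₁, …, u_{t+1}}. -/
/-- The value of the Jung–Hirzebruch continued fraction `b₁ − 1/(b₂ − 1/(⋯ − 1/b_t))`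
(note that `1/0 = 0` in `ℚ`, so the empty tail contributes nothing). -/
def jhContFrac : List ℤ → ℚ
  | [] => 0
  | b :: l => (b : ℚ) - 1 / jhContFrac l

/-- The sequence of lattice vectors `u₀ = (r,0)`, `u₁ = (r−a,1)`,
`u_{i+1} = bᵢ·uᵢ − u_{i−1}`, associated to the continued fraction entries `L = [b₁,…,b_t]`. -/
def jhSeq (r a : ℕ) (L : List ℤ) : ℕ → ℤ × ℤ
  | 0 => ((r : ℤ), 0)
  | 1 => ((r : ℤ) - (a : ℤ), 1)
  | (i + 2) => L.getD i 0 • jhSeq r a L (i + 1) - jhSeq r a L i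

lemma jhCF_gt_one : ∀ L : List ℤ, L ≠ [] → (∀ b ∈ L, 2 ≤ b) → 1 < jhContFrac L := by
  intro L
  induction L with
  | nil => intro h; exact absurd rfl h
  | cons b l ih =>
    intro _ hb
    have hb2 : (2:ℚ) ≤ (b:ℚ) := by exact_mod_cast hb b List.mem_cons_self
    rcases eq_or_ne l [] with rfl | hl
    · simp only [jhContFrac]; norm_num; linarith
    · have h1 := ih hl (fun x hx => hb x (List.mem_cons_of_mem _ hx))
      have h2 : (0:ℚ) < 1 / jhContFrac l := by positivity
      have h3 : 1 / jhContFrac l < 1 := by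
        rw [div_lt_one (by linarith)]; linarith
      simp only [jhContFrac]; linarith

lemma jhSeq_succ (r a : ℕ) (L : List ℤ) (i : ℕ) :
    jhSeq r a L (i+2) = L.getD i 0 • jhSeq r a L (i+1) - jhSeq r a L i := rfl

lemma jh_det (r a : ℕ) (L : List ℤ) (i : ℕ) :
    (jhSeq r a L i).1 * (jhSeq r a L (i+1)).2 - (jhSeq r a L (i+1)).1 * (jhSeq r a L i).2 = r := by
  induction i with
  | zero => simp [jhSeq]
  | succ n ih =>
    rw [jhSeq_succ]
    simp only [Prod.fst_sub, Prod.snd_sub, Prod.smul_fst, Prod.smul_snd, smul_eq_mul]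
    linear_combination ih

lemma jh_dvd (r a : ℕ) (L : List ℤ) (i : ℕ) :
    (r:ℤ) ∣ (jhSeq r a L i).1 + a * (jhSeq r a L i).2 := by
  have key : ∀ j, ((r:ℤ) ∣ (jhSeq r a L j).1 + a * (jhSeq r a L j).2) ∧
      ((r:ℤ) ∣ (jhSeq r a L (j+1)).1 + a * (jhSeq r a L (j+1)).2) := by
    intro j
    induction j with
    | zero => constructor <;> simp [jhSeq]
    | succ n ih =>
      refine ⟨ih.2, ?_⟩
      rw [jhSeq_succ]
      simp only [Prod.fst_sub, Prod.snd_sub, Prod.smul_fst, Prod.smul_snd, smul_eq_mul]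
      have heq : L.getD n 0 * (jhSeq r a L (n+1)).1 - (jhSeq r a L n).1
            + (a:ℤ) * (L.getD n 0 * (jhSeq r a L (n+1)).2 - (jhSeq r a L n).2)
          = L.getD n 0 * ((jhSeq r a L (n+1)).1 + a * (jhSeq r a L (n+1)).2)
            - ((jhSeq r a L n).1 + a * (jhSeq r a L n).2) := by ring
      rw [heq]
      exact dvd_sub (ih.2.mul_left _) ih.1
  exact (key i).1

lemma getD_mem (L : List ℤ) (i : ℕ) (h : i < L.length) : L.getD i 0 ∈ L := by
  rw [List.getD_eq_getElem L 0 h]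
  exact List.getElem_mem h

lemma jh_q_mono (r a : ℕ) (L : List ℤ) (hb : ∀ b ∈ L, 2 ≤ b) :
    ∀ i ≤ L.length, 0 ≤ (jhSeq r a L i).2 ∧ (jhSeq r a L i).2 < (jhSeq r a L (i+1)).2 := by
  intro i
  induction i with
  | zero => intro _; simp [jhSeq]
  | succ n ih =>
    intro hn
    obtain ⟨h0, h1⟩ := ih (le_of_lt hn)
    have hb2 : 2 ≤ L.getD n 0 := hb _ (getD_mem L n hn)
    refine ⟨by linarith, ?_⟩
    rw [jhSeq_succ]
    simp only [Prod.snd_sub, Prod.smul_snd, smul_eq_mul]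
    nlinarith

lemma jh_chain (r a : ℕ) (har : a < r) (L : List ℤ) (hb : ∀ b ∈ L, 2 ≤ b)
    (hcf : (r : ℚ) / ((r : ℚ) - (a : ℚ)) = jhContFrac L) :
    ∀ i < L.length, 0 < (jhSeq r a L (i+1)).1 ∧
      ((jhSeq r a L i).1 : ℚ) = jhContFrac (L.drop i) * ((jhSeq r a L (i+1)).1 : ℚ) := by
  have hra : (0:ℚ) < (r:ℚ) - (a:ℚ) := by
    have : (a:ℚ) < (r:ℚ) := by exact_mod_cast har
    linarith
  intro i
  induction i with
  | zero =>
    intro _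
    have h1 : (jhSeq r a L 1).1 = (r:ℤ) - a := rfl
    have h0 : (jhSeq r a L 0).1 = (r:ℤ) := rfl
    constructor
    · rw [h1]; have : (a:ℤ) < r := by exact_mod_cast har
      linarith
    · rw [List.drop_zero, h0, h1]
      rw [div_eq_iff (ne_of_gt hra)] at hcf
      push_cast
      linarith
  | succ n ih =>
    intro hn
    obtain ⟨hp, hEq⟩ := ih (Nat.lt_of_succ_lt hn)
    have hnlen : n < L.length := Nat.lt_of_succ_lt hn
    have hdrop : L.drop n = L[n] :: L.drop (n+1) := List.drop_eq_getElem_cons hnlen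
    have hdne : L.drop (n+1) ≠ [] := by
      intro h
      have := (List.length_drop : (L.drop (n+1)).length = L.length - (n+1))
      rw [h] at this
      simp at this
      omega
    have hw : 1 < jhContFrac (L.drop (n+1)) :=
      jhCF_gt_one _ hdne (fun x hx => hb x (List.mem_of_mem_drop hx))
    set w := jhContFrac (L.drop (n+1)) with hwdef
    have hcfn : jhContFrac (L.drop n) = (L[n] : ℚ) - 1 / w := by
      rw [hdrop]; rfl
    have hgd : L.getD n 0 = L[n] := List.getD_eq_getElem L 0 hnlen
    have h2 : (jhSeq r a L (n+2)).1 = L[n] * (jhSeq r a L (n+1)).1 - (jhSeq r a L n).1 := by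
      rw [jhSeq_succ]
      simp only [Prod.fst_sub, Prod.smul_fst, smul_eq_mul, hgd]
    have hw0 : (0:ℚ) < w := by linarith
    have hQ2 : ((jhSeq r a L (n+2)).1 : ℚ) = (1/w) * ((jhSeq r a L (n+1)).1 : ℚ) := by
      have : ((jhSeq r a L (n+2)).1 : ℚ)
          = (L[n] : ℚ) * ((jhSeq r a L (n+1)).1 : ℚ) - ((jhSeq r a L n).1 : ℚ) := by
        rw [h2]; push_cast; ring
      rw [this, hEq, hcfn]
      ring
    have hpQ : (0:ℚ) < ((jhSeq r a L (n+1)).1 : ℚ) := by exact_mod_cast hp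
    constructor
    · have : (0:ℚ) < ((jhSeq r a L (n+2)).1 : ℚ) := by
        rw [hQ2]; positivity
      exact_mod_cast this
    · rw [hQ2]
      field_simp

lemma jh_p_last (r a : ℕ) (har : a < r) (L : List ℤ) (hL : L ≠ []) (hb : ∀ b ∈ L, 2 ≤ b)
    (hcf : (r : ℚ) / ((r : ℚ) - (a : ℚ)) = jhContFrac L) :
    (jhSeq r a L (L.length + 1)).1 = 0 := by
  obtain ⟨s, hs⟩ : ∃ s, L.length = s + 1 := by
    cases h : L.length with
    | zero => exact absurd (List.length_eq_zero_iff.mp h) hL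
    | succ n => exact ⟨n, rfl⟩
  have hslt : s < L.length := by omega
  obtain ⟨hp, hEq⟩ := jh_chain r a har L hb hcf s hslt
  have hdrop : L.drop s = [L[s]] := by
    rw [List.drop_eq_getElem_cons hslt]
    have : L.drop (s+1) = [] := List.drop_eq_nil_of_le (by omega)
    rw [this]
  have hcfs : jhContFrac (L.drop s) = (L[s] : ℚ) := by
    rw [hdrop]
    show (L[s] : ℚ) - 1 / jhContFrac [] = _
    show (L[s] : ℚ) - 1 / 0 = _
    simp
  have hint : (jhSeq r a L s).1 = L[s] * (jhSeq r a L (s+1)).1 := by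
    have : ((jhSeq r a L s).1 : ℚ) = ((L[s] * (jhSeq r a L (s+1)).1 : ℤ) : ℚ) := by
      rw [hEq, hcfs]; push_cast; ring
    exact_mod_cast this
  have hgd : L.getD s 0 = L[s] := List.getD_eq_getElem L 0 hslt
  rw [hs]
  show (jhSeq r a L (s+2)).1 = 0
  rw [jhSeq_succ]
  simp only [Prod.fst_sub, Prod.smul_fst, smul_eq_mul, hgd]
  rw [hint]
  ring

lemma jh_p_nonneg (r a : ℕ) (har : a < r) (L : List ℤ) (hL : L ≠ []) (hb : ∀ b ∈ L, 2 ≤ b)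
    (hcf : (r : ℚ) / ((r : ℚ) - (a : ℚ)) = jhContFrac L) :
    ∀ i ≤ L.length + 1, 0 ≤ (jhSeq r a L i).1 := by
  intro i hi
  rcases Nat.lt_or_ge i (L.length + 1) with h | h
  · cases i with
    | zero => show (0:ℤ) ≤ (r:ℤ); positivity
    | succ n => exact le_of_lt (jh_chain r a har L hb hcf n (by omega)).1
  · have : i = L.length + 1 := le_antisymm hi h
    rw [this, jh_p_last r a har L hL hb hcf]

lemma jh_q_last (r a : ℕ) (hcop : Nat.Coprime r a) (har : a < r) (L : List ℤ)
    (hL : L ≠ []) (hb : ∀ b ∈ L, 2 ≤ b)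
    (hcf : (r : ℚ) / ((r : ℚ) - (a : ℚ)) = jhContFrac L) :
    (jhSeq r a L (L.length + 1)).2 = r := by
  set t := L.length
  have hdet := jh_det r a L t
  have hp0 := jh_p_last r a har L hL hb hcf
  have hprod : (jhSeq r a L t).1 * (jhSeq r a L (t+1)).2 = r := by
    rw [hp0] at hdet; linarith
  have hdvd1 : (jhSeq r a L (t+1)).2 ∣ (r:ℤ) := Dvd.intro_left _ hprod
  have hdvd2 : (r:ℤ) ∣ (jhSeq r a L (t+1)).2 := by
    have h := jh_dvd r a L (t+1)
    rw [hp0] at h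
    simp only [zero_add] at h
    have hcop' : IsCoprime (r:ℤ) (a:ℤ) := Nat.isCoprime_iff_coprime.mpr hcop
    exact hcop'.dvd_of_dvd_mul_left h
  have hpos : 0 < (jhSeq r a L (t+1)).2 := by
    have := jh_q_mono r a L hb t le_rfl
    linarith [this.1, this.2]
  exact Int.dvd_antisymm hpos.le (by positivity) hdvd1 hdvd2

lemma ivt_aux (g : ℕ → ℤ) : ∀ N : ℕ, 0 ≤ g 0 → g (N+1) ≤ 0 → ∃ i ≤ N, 0 ≤ g i ∧ g (i+1) ≤ 0 := by
  intro N h0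
  induction N with
  | zero => intro hN; exact ⟨0, le_refl 0, h0, hN⟩
  | succ n ih =>
    intro hN
    rcases le_or_gt (g (n+1)) 0 with h | h
    · obtain ⟨i, hi, h1, h2⟩ := ih h
      exact ⟨i, hi.trans (Nat.le_succ n), h1, h2⟩
    · exact ⟨n+1, le_refl _, h.le, hN⟩

/-- Let `r > a ≥ 1` be coprime and let `b₁,…,b_t ≥ 2` be the Jung–Hirzebruch continued
fraction entries of `r/(r−a)`.  With `u₀ = (r,0)`, `u₁ = (r−a,1)` and
`u_{i+1} = bᵢuᵢ − u_{i−1}`, every `uᵢ` (for `0 ≤ i ≤ t+1`) lies in the monoid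
`S = {(m,n) ∈ ℕ² : m + a·n ≡ 0 (mod r)}`, and `S` is generated as a monoid by
`u₀, u₁, …, u_{t+1}`. -/
theorem statement11 (r a : ℕ) (hcop : Nat.Coprime r a) (ha : 1 ≤ a) (har : a < r)
    (L : List ℤ) (hL : L ≠ []) (hb : ∀ b ∈ L, 2 ≤ b)
    (hcf : (r : ℚ) / ((r : ℚ) - (a : ℚ)) = jhContFrac L) :
    (∀ i ≤ L.length + 1,
        0 ≤ (jhSeq r a L i).1 ∧ 0 ≤ (jhSeq r a L i).2 ∧
        (r : ℤ) ∣ (jhSeq r a L i).1 + (a : ℤ) * (jhSeq r a L i).2) ∧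
      ∀ p : ℤ × ℤ,
        p ∈ AddSubmonoid.closure {q : ℤ × ℤ | ∃ i ≤ L.length + 1, q = jhSeq r a L i} ↔
          (0 ≤ p.1 ∧ 0 ≤ p.2 ∧ (r : ℤ) ∣ p.1 + (a : ℤ) * p.2) := by
  have hr0 : (0:ℤ) < (r:ℤ) := by exact_mod_cast Nat.lt_of_lt_of_le (Nat.lt_of_lt_of_le Nat.zero_lt_one ha) har.le
  have hmem : ∀ i ≤ L.length + 1,
      0 ≤ (jhSeq r a L i).1 ∧ 0 ≤ (jhSeq r a L i).2 ∧
      (r : ℤ) ∣ (jhSeq r a L i).1 + (a : ℤ) * (jhSeq r a L i).2 := by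
    intro i hi
    refine ⟨jh_p_nonneg r a har L hL hb hcf i hi, ?_, jh_dvd r a L i⟩
    rcases Nat.lt_or_ge i (L.length + 1) with h | h
    · exact (jh_q_mono r a L hb i (by omega)).1
    · have hi' : i = L.length + 1 := le_antisymm hi h
      have := jh_q_mono r a L hb L.length le_rfl
      rw [hi']
      linarith [this.1, this.2]
  refine ⟨hmem, ?_⟩
  intro p
  constructor
  · -- forward: closure ⊆ S
    intro hp
    let T : AddSubmonoid (ℤ × ℤ) :=
      { carrier := {q : ℤ × ℤ | 0 ≤ q.1 ∧ 0 ≤ q.2 ∧ (r:ℤ) ∣ q.1 + (a:ℤ) * q.2}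
        zero_mem' := ⟨le_refl 0, le_refl 0, by simp⟩
        add_mem' := by
          rintro x y ⟨hx1, hx2, hx3⟩ ⟨hy1, hy2, hy3⟩
          refine ⟨add_nonneg hx1 hy1, add_nonneg hx2 hy2, ?_⟩
          have : (x + y).1 + (a:ℤ) * (x + y).2
              = (x.1 + (a:ℤ) * x.2) + (y.1 + (a:ℤ) * y.2) := by
            simp only [Prod.fst_add, Prod.snd_add]; ring
          rw [this]
          exact dvd_add hx3 hy3 }
    have hle : AddSubmonoid.closure {q : ℤ × ℤ | ∃ i ≤ L.length + 1, q = jhSeq r a L i} ≤ T := by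
      rw [AddSubmonoid.closure_le]
      rintro q ⟨i, hi, rfl⟩
      exact hmem i hi
    exact hle hp
  · -- backward
    rintro ⟨hm, hn, hd⟩
    set g : ℕ → ℤ := fun i => (jhSeq r a L i).1 * p.2 - (jhSeq r a L i).2 * p.1 with hg
    have hg0 : 0 ≤ g 0 := by
      show 0 ≤ (jhSeq r a L 0).1 * p.2 - (jhSeq r a L 0).2 * p.1
      have h1 : (jhSeq r a L 0).1 = (r:ℤ) := rfl
      have h2 : (jhSeq r a L 0).2 = 0 := rfl
      rw [h1, h2]
      nlinarith
    have hgt : g (L.length + 1) ≤ 0 := by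
      show (jhSeq r a L (L.length+1)).1 * p.2 - (jhSeq r a L (L.length+1)).2 * p.1 ≤ 0
      rw [jh_p_last r a har L hL hb hcf, jh_q_last r a hcop har L hL hb hcf]
      nlinarith
    obtain ⟨i, hit, hgi, hgi1⟩ := ivt_aux g L.length hg0 hgt
    set u := jhSeq r a L i with hu
    set v := jhSeq r a L (i+1) with hv
    have hdvdα : (r:ℤ) ∣ p.1 * v.2 - p.2 * v.1 := by
      have heq : p.1 * v.2 - p.2 * v.1
          = v.2 * (p.1 + (a:ℤ) * p.2) - p.2 * (v.1 + (a:ℤ) * v.2) := by ring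
      rw [heq]
      exact dvd_sub (hd.mul_left _) ((jh_dvd r a L (i+1)).mul_left _)
    have hdvdβ : (r:ℤ) ∣ u.1 * p.2 - u.2 * p.1 := by
      have heq : u.1 * p.2 - u.2 * p.1
          = p.2 * (u.1 + (a:ℤ) * u.2) - u.2 * (p.1 + (a:ℤ) * p.2) := by ring
      rw [heq]
      exact dvd_sub ((jh_dvd r a L i).mul_left _) (hd.mul_left _)
    obtain ⟨α, hα⟩ := hdvdα
    obtain ⟨β, hβ⟩ := hdvdβ
    have hαnn : 0 ≤ α := by
      have h1 : 0 ≤ p.1 * v.2 - p.2 * v.1 := by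
        have : g (i+1) = v.1 * p.2 - v.2 * p.1 := rfl
        linarith [hgi1, this ▸ hgi1]
      nlinarith [hα]
    have hβnn : 0 ≤ β := by
      have h1 : 0 ≤ u.1 * p.2 - u.2 * p.1 := hgi
      nlinarith [hβ]
    have hdet := jh_det r a L i
    rw [← hu, ← hv] at hdet
    have hr0' : (r:ℤ) ≠ 0 := ne_of_gt hr0
    have heq1 : α * u.1 + β * v.1 = p.1 := by
      have key : (r:ℤ) * (α * u.1 + β * v.1) = (r:ℤ) * p.1 := by
        linear_combination (-u.1) * hα + (-v.1) * hβ + p.1 * hdet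
      exact mul_left_cancel₀ hr0' key
    have heq2 : α * u.2 + β * v.2 = p.2 := by
      have key : (r:ℤ) * (α * u.2 + β * v.2) = (r:ℤ) * p.2 := by
        linear_combination (-u.2) * hα + (-v.2) * hβ + p.2 * hdet
      exact mul_left_cancel₀ hr0' key
    have hp_eq : p = α • u + β • v := by
      apply Prod.ext
      · simp only [Prod.fst_add, Prod.smul_fst, smul_eq_mul]
        linarith [heq1]
      · simp only [Prod.snd_add, Prod.smul_snd, smul_eq_mul]
        linarith [heq2]
    have humem : u ∈ AddSubmonoid.closure {q : ℤ × ℤ | ∃ i ≤ L.length + 1, q = jhSeq r a L i} :=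
      AddSubmonoid.subset_closure ⟨i, by omega, rfl⟩
    have hvmem : v ∈ AddSubmonoid.closure {q : ℤ × ℤ | ∃ i ≤ L.length + 1, q = jhSeq r a L i} :=
      AddSubmonoid.subset_closure ⟨i+1, by omega, rfl⟩
    rw [hp_eq, show α = (α.toNat : ℤ) from (Int.toNat_of_nonneg hαnn).symm,
        show β = (β.toNat : ℤ) from (Int.toNat_of_nonneg hβnn).symm,
        natCast_zsmul, natCast_zsmul]
    exact add_mem (AddSubmonoid.nsmul_mem _ humem _) (AddSubmonoid.nsmul_mem _ hvmem _)
end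

section
/- Let k be a field, S ⊆ ℤ^d a finitely generated submonoid that generates ℤ^d as a group, ν : ℤ^d → ℤ a group homomorphism with ν(S) ⊆ ℕ, and M = ker ν. Grade the monoid algebra k[S] by ℤ by declaring the monomial t^u to have degree ν(u), fix u₀ ∈ S, and form the localization k[S][(t^{u₀})^{-1}] at the homogeneous element t^{u₀}, with its induced ℤ-grading. Then the degree-zero subalgebra of k[S][(t^{u₀})^{-1}] is isomorphic as a k-algebra to the monoid algebra k[S₀] of the submonoid S₀ = { u − j·u₀ : u ∈ S, j ∈ ℕ, ν(u) = j·ν(u₀) } of M. -/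
/-- The shifted monoid `S₀ = { u − j·u₀ : u ∈ S, j ∈ ℕ, ν(u) = j·ν(u₀) }`, a submonoid of
`M = ker ν` giving the degree-zero part of the localization of `k[S]` at `t^{u₀}`. -/
def degreeZeroShiftMonoid {d : ℕ} (S : AddSubmonoid (Fin d → ℤ)) (ν : (Fin d → ℤ) →+ ℤ)
    (u₀ : Fin d → ℤ) : AddSubmonoid (Fin d → ℤ) where
  carrier := {w | ∃ u ∈ S, ∃ j : ℕ, ν u = (j : ℤ) * ν u₀ ∧ w = u - (j : ℕ) • u₀}
  zero_mem' := ⟨0, S.zero_mem, 0, by simp, by simp⟩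
  add_mem' := by
    rintro w₁ w₂ ⟨u₁, hu₁, j₁, h₁, rfl⟩ ⟨u₂, hu₂, j₂, h₂, rfl⟩
    refine ⟨u₁ + u₂, S.add_mem hu₁ hu₂, j₁ + j₂, ?_, ?_⟩
    · rw [map_add, h₁, h₂]
      push_cast
      ring
    · rw [add_smul]
      abel

set_option synthInstance.maxHeartbeats 1000000
set_option maxHeartbeats 1000000

noncomputable section Statement15Aux

namespace Statement15Aux

instance uniqueSumsSub {d : ℕ} (S : AddSubmonoid (Fin d → ℤ)) : UniqueSums ↥S :=
  UniqueSums.of_injective_addHom ⟨Subtype.val, fun _ _ => rfl⟩ Subtype.val_injective inferInstance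

variable (k : Type*) [Field k] {d : ℕ} (S : AddSubmonoid (Fin d → ℤ))
  (ν : (Fin d → ℤ) →+ ℤ) (u₀ : Fin d → ℤ) (hu₀ : u₀ ∈ S)

/-- The element `t^{u₀}`. -/
abbrev T : AddMonoidAlgebra k ↥S := AddMonoidAlgebra.single (⟨u₀, hu₀⟩ : S) (1 : k)

/-- The localization `k[S][(t^{u₀})^{-1}]`. -/
abbrev Loc := Localization.Away (T k S u₀ hu₀)

/-- The denominator `t^{j u₀}`. -/
abbrev den (j : ℕ) : Submonoid.powers (T k S u₀ hu₀) :=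
  ⟨T k S u₀ hu₀ ^ j,
    Submonoid.pow_mem _ (Submonoid.mem_powers (T k S u₀ hu₀)) j⟩

theorem T_pow (j : ℕ) :
    T k S u₀ hu₀ ^ j = AddMonoidAlgebra.single ((j • ⟨u₀, hu₀⟩ : S)) (1 : k) := by
  rw [AddMonoidAlgebra.single_pow, one_pow]

theorem mem_dzsm {w : Fin d → ℤ} :
    w ∈ degreeZeroShiftMonoid S ν u₀ ↔
      ∃ u ∈ S, ∃ j : ℕ, ν u = (j : ℤ) * ν u₀ ∧ w = u - (j : ℕ) • u₀ := Iff.rfl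

/-- independence of the representation -/
theorem rep_indep (u u' : ↥S) (j j' : ℕ)
    (h : (u : Fin d → ℤ) - j • u₀ = (u' : Fin d → ℤ) - j' • u₀) :
    (Localization.mk (AddMonoidAlgebra.single u (1 : k)) (den k S u₀ hu₀ j) :
        Loc k S u₀ hu₀) =
      Localization.mk (AddMonoidAlgebra.single u' (1 : k)) (den k S u₀ hu₀ j') := by
  rw [Localization.mk_eq_mk_iff]
  apply Localization.r_of_eq
  show T k S u₀ hu₀ ^ j' * AddMonoidAlgebra.single u (1 : k) =
    T k S u₀ hu₀ ^ j * AddMonoidAlgebra.single u' (1 : k)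
  rw [T_pow, T_pow, AddMonoidAlgebra.single_mul_single, AddMonoidAlgebra.single_mul_single,
    one_mul]
  congr 1
  apply Subtype.ext
  have h' : (u : Fin d → ℤ) + j' • u₀ = (u' : Fin d → ℤ) + j • u₀ :=
    sub_eq_sub_iff_add_eq_add.mp h
  show (j' • u₀ : Fin d → ℤ) + ↑u = j • u₀ + ↑u'
  rw [add_comm ((j' : ℕ) • u₀), add_comm ((j : ℕ) • u₀)]
  exact h'

variable {S ν u₀}

/-- chosen `u` representing `w ∈ S₀`. -/
def repU (w : ↥(degreeZeroShiftMonoid S ν u₀)) : ↥S :=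
  ⟨((mem_dzsm S ν u₀).mp w.2).choose, ((mem_dzsm S ν u₀).mp w.2).choose_spec.1⟩

/-- chosen exponent `j` representing `w ∈ S₀`. -/
def repJ (w : ↥(degreeZeroShiftMonoid S ν u₀)) : ℕ :=
  ((mem_dzsm S ν u₀).mp w.2).choose_spec.2.choose

theorem repJ_spec (w : ↥(degreeZeroShiftMonoid S ν u₀)) :
    ν ↑(repU w) = (repJ w : ℤ) * ν u₀ :=
  ((mem_dzsm S ν u₀).mp w.2).choose_spec.2.choose_spec.1

theorem repU_spec (w : ↥(degreeZeroShiftMonoid S ν u₀)) :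
    (w : Fin d → ℤ) = ↑(repU w) - repJ w • u₀ :=
  ((mem_dzsm S ν u₀).mp w.2).choose_spec.2.choose_spec.2

theorem nu_coe_zero (w : ↥(degreeZeroShiftMonoid S ν u₀)) : ν ↑w = 0 := by
  rw [repU_spec w, map_sub, repJ_spec w, map_nsmul, nsmul_eq_mul, sub_self]

variable (ν u₀) in
/-- value of the monoid map on `w ∈ S₀`. -/
def psival (hu₀ : u₀ ∈ S) (w : ↥(degreeZeroShiftMonoid S ν u₀)) : Loc k S u₀ hu₀ :=
  Localization.mk (AddMonoidAlgebra.single (repU w) (1 : k)) (den k S u₀ hu₀ (repJ w))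

theorem psival_eq (w : ↥(degreeZeroShiftMonoid S ν u₀)) (u : ↥S) (j : ℕ)
    (h : (w : Fin d → ℤ) = ↑u - j • u₀) :
    psival k ν u₀ hu₀ w =
      Localization.mk (AddMonoidAlgebra.single u (1 : k)) (den k S u₀ hu₀ j) :=
  rep_indep k S u₀ hu₀ _ _ _ _ (by rw [← repU_spec w, h])

variable (S ν u₀) in
/-- the monoid hom `Multiplicative S₀ →* Loc`, `w ↦ t^u / t^{j u₀}`. -/
def psi : Multiplicative ↥(degreeZeroShiftMonoid S ν u₀) →* Loc k S u₀ hu₀ where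
  toFun w := psival k ν u₀ hu₀ (Multiplicative.toAdd w)
  map_one' := by
    show psival k ν u₀ hu₀ 0 = 1
    have h0 : (((0 : ↥(degreeZeroShiftMonoid S ν u₀))) : Fin d → ℤ) =
        ↑(0 : ↥S) - (0 : ℕ) • u₀ := by simp
    rw [psival_eq k hu₀ 0 0 0 h0]
    have hden : den k S u₀ hu₀ 0 = 1 := Subtype.ext (pow_zero _)
    rw [hden, ← AddMonoidAlgebra.one_def, Localization.mk_one_eq_algebraMap, map_one]
  map_mul' a b := by
    show psival k ν u₀ hu₀ (Multiplicative.toAdd a + Multiplicative.toAdd b) =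
      psival k ν u₀ hu₀ (Multiplicative.toAdd a) * psival k ν u₀ hu₀ (Multiplicative.toAdd b)
    set wa := Multiplicative.toAdd a with hwa
    set wb := Multiplicative.toAdd b with hwb
    have hrep : ((wa + wb : ↥(degreeZeroShiftMonoid S ν u₀)) : Fin d → ℤ) =
        ↑(repU wa + repU wb) - (repJ wa + repJ wb) • u₀ := by
      show (wa : Fin d → ℤ) + ↑wb = (↑(repU wa) + ↑(repU wb)) - (repJ wa + repJ wb) • u₀
      rw [repU_spec wa, repU_spec wb, add_nsmul]
      abel
    rw [psival_eq k hu₀ _ _ _ hrep]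
    rw [psival, psival, Localization.mk_mul, AddMonoidAlgebra.single_mul_single, one_mul]
    congr 1
    apply Subtype.ext
    show T k S u₀ hu₀ ^ (repJ wa + repJ wb) = T k S u₀ hu₀ ^ repJ wa * T k S u₀ hu₀ ^ repJ wb
    exact pow_add _ _ _

variable (S) in
/-- `Finsupp.mapDomain`, coerced to land in the monoid algebra. -/
abbrev mapD {W : Type*} (e : W → ↥S) (f : W →₀ k) : AddMonoidAlgebra k ↥S :=
  AddMonoidAlgebra.ofCoeff (Finsupp.mapDomain e f)

variable (S ν u₀) in
/-- the algebra hom `k[S₀] →ₐ[k] Loc`. -/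
def phi : AddMonoidAlgebra k ↥(degreeZeroShiftMonoid S ν u₀) →ₐ[k] Loc k S u₀ hu₀ :=
  AddMonoidAlgebra.lift k _ _ (psi k S ν u₀ hu₀)

theorem phi_apply_eq (f : AddMonoidAlgebra k ↥(degreeZeroShiftMonoid S ν u₀))
    (e : ↥(degreeZeroShiftMonoid S ν u₀) → ↥S) (J : ℕ)
    (he : ∀ w ∈ f.coeff.support, (w : Fin d → ℤ) = ↑(e w) - J • u₀) :
    phi k S ν u₀ hu₀ f =
      Localization.mk (mapD k S e f.coeff) (den k S u₀ hu₀ J) := by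
  have hnum : mapD k S e f.coeff = ∑ w ∈ f.coeff.support, AddMonoidAlgebra.single (e w) (f.coeff w) := by
    apply AddMonoidAlgebra.coeff_injective; rw [AddMonoidAlgebra.coeff_sum]; rfl
  rw [hnum, Localization.mk_sum, phi, AddMonoidAlgebra.lift_apply, Finsupp.sum]
  apply Finset.sum_congr rfl
  intro w hw
  show f.coeff w • psival k ν u₀ hu₀ w = _
  rw [psival_eq k hu₀ w (e w) J (he w hw), Localization.smul_mk, AddMonoidAlgebra.smul_single', mul_one]

theorem phi_single (w : ↥(degreeZeroShiftMonoid S ν u₀)) (c : k) :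
    phi k S ν u₀ hu₀ (AddMonoidAlgebra.single w c) = c • psival k ν u₀ hu₀ w := by
  rw [phi, AddMonoidAlgebra.lift_apply]
  show Finsupp.sum (Finsupp.single w c) (fun a b => b • psival k ν u₀ hu₀ a) =
    c • psival k ν u₀ hu₀ w
  exact Finsupp.sum_single_index
    (by rw [psival, Localization.smul_mk, zero_smul, Localization.mk_zero])

end Statement15Aux

end Statement15Aux

open Statement15Aux in
/-- main theorem -/
theorem statement15 (k : Type*) [Field k] (d : ℕ) (S : AddSubmonoid (Fin d → ℤ))
    (hfg : S.FG) (hgen : AddSubgroup.closure (S : Set (Fin d → ℤ)) = ⊤)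
    (ν : (Fin d → ℤ) →+ ℤ) (hν : ∀ s ∈ S, 0 ≤ ν s) (u₀ : Fin d → ℤ) (hu₀ : u₀ ∈ S) :
    ∃ A : Subalgebra k
        (Localization.Away (AddMonoidAlgebra.single (⟨u₀, hu₀⟩ : S) (1 : k))),
      (A : Set (Localization.Away (AddMonoidAlgebra.single (⟨u₀, hu₀⟩ : S) (1 : k)))) =
        {x | ∃ (f : AddMonoidAlgebra k S) (j : ℕ),
          (∀ u ∈ f.coeff.support, ν (u : Fin d → ℤ) = (j : ℤ) * ν u₀) ∧
          x = Localization.mk f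
            ⟨(AddMonoidAlgebra.single (⟨u₀, hu₀⟩ : S) (1 : k)) ^ j,
              Submonoid.pow_mem _
                (Submonoid.mem_powers (AddMonoidAlgebra.single (⟨u₀, hu₀⟩ : S) (1 : k))) j⟩} ∧
      Nonempty (A ≃ₐ[k] AddMonoidAlgebra k (degreeZeroShiftMonoid S ν u₀)) := by
  classical
  set φ := phi k S ν u₀ hu₀ with hφ
  -- injectivity of φ
  have hinj : Function.Injective φ := by
    rw [injective_iff_map_eq_zero]
    intro f hf
    set J := f.coeff.support.sup repJ with hJ
    set e : ↥(degreeZeroShiftMonoid S ν u₀) → ↥S :=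
      fun w => repU w + (J - repJ w) • (⟨u₀, hu₀⟩ : ↥S) with he_def
    have hew : ∀ w, repJ w ≤ J → ((e w : Fin d → ℤ)) = ↑w + J • u₀ := by
      intro w hle
      show ((repU w : Fin d → ℤ) + (J - repJ w) • u₀) = ↑w + J • u₀
      rw [repU_spec w]
      have : ((J - repJ w) • u₀ : Fin d → ℤ) = J • u₀ - repJ w • u₀ := by
        rw [eq_sub_iff_add_eq, ← add_nsmul, Nat.sub_add_cancel hle]
      rw [this]; abel
    have he : ∀ w ∈ f.coeff.support, (w : Fin d → ℤ) = ↑(e w) - J • u₀ := by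
      intro w hw
      rw [hew w (Finset.le_sup hw)]; abel
    rw [phi_apply_eq k hu₀ f e J he, Localization.mk_eq_mk',
      IsLocalization.mk'_eq_zero_iff] at hf
    obtain ⟨m, hm⟩ := hf
    have hT : T k S u₀ hu₀ ≠ 0 := fun h =>
      one_ne_zero (α := k) (AddMonoidAlgebra.single_eq_zero.mp h)
    obtain ⟨n, hn⟩ := m.2
    have hm0 : (m : AddMonoidAlgebra k ↥S) ≠ 0 := by
      rw [← hn]; exact pow_ne_zero _ hT
    have hG : mapD k S e f.coeff = (0 : AddMonoidAlgebra k ↥S) := by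
      rcases mul_eq_zero.mp hm with h | h
      · exact absurd h hm0
      · exact h
    have hinjOn : Set.InjOn e {w | repJ w ≤ J} := by
      intro w1 h1 w2 h2 h
      have : ((w1 : Fin d → ℤ)) + J • u₀ = ((w2 : Fin d → ℤ)) + J • u₀ := by
        rw [← hew w1 h1, ← hew w2 h2, h]
      exact Subtype.ext (add_right_cancel this)
    have := Finsupp.mapDomain_injOn (M := k) {w | repJ w ≤ J} hinjOn
    apply AddMonoidAlgebra.coeff_injective
    refine this ?_ ?_ ?_
    · intro w hw
      simp only [Finset.mem_coe] at hw
      exact Finset.le_sup (f := repJ) hw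
    · simp
    · simpa using congrArg AddMonoidAlgebra.coeff hG
  refine ⟨φ.range, ?_, ⟨(AlgEquiv.ofInjective φ hinj).symm⟩⟩
  ext x
  simp only [Set.mem_setOf_eq, SetLike.mem_coe, AlgHom.mem_range]
  constructor
  · rintro ⟨f, rfl⟩
    set J := f.coeff.support.sup repJ with hJ
    set e : ↥(degreeZeroShiftMonoid S ν u₀) → ↥S :=
      fun w => repU w + (J - repJ w) • (⟨u₀, hu₀⟩ : ↥S) with he_def
    have hew : ∀ w, repJ w ≤ J → ((e w : Fin d → ℤ)) = ↑w + J • u₀ := by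
      intro w hle
      show ((repU w : Fin d → ℤ) + (J - repJ w) • u₀) = ↑w + J • u₀
      rw [repU_spec w]
      have : ((J - repJ w) • u₀ : Fin d → ℤ) = J • u₀ - repJ w • u₀ := by
        rw [eq_sub_iff_add_eq, ← add_nsmul, Nat.sub_add_cancel hle]
      rw [this]; abel
    have he : ∀ w ∈ f.coeff.support, (w : Fin d → ℤ) = ↑(e w) - J • u₀ := by
      intro w hw
      rw [hew w (Finset.le_sup hw)]; abel
    refine ⟨mapD k S e f.coeff, J, ?_, ?_⟩
    swap
    · show φ f = _
      rw [hφ, phi_apply_eq k hu₀ f e J he]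
    intro u hu
    have hu' := Finsupp.mapDomain_support hu
    rw [Finset.mem_image] at hu'
    obtain ⟨w, hw, rfl⟩ := hu'
    rw [hew w (Finset.le_sup hw), map_add, nu_coe_zero w, map_nsmul, nsmul_eq_mul, zero_add]
  · rintro ⟨f, j, hsupp, rfl⟩
    have key : Localization.mk f (den k S u₀ hu₀ j) =
        ∑ u ∈ f.coeff.support, Localization.mk (AddMonoidAlgebra.single u (f.coeff u))
          (den k S u₀ hu₀ j) := by
      conv_lhs => rw [← AddMonoidAlgebra.sum_coeff_single f]
      rw [Finsupp.sum, Localization.mk_sum]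
    show Localization.mk f (den k S u₀ hu₀ j) ∈ φ.range
    rw [key]
    apply Subalgebra.sum_mem
    intro u hu
    have hwmem : (u : Fin d → ℤ) - j • u₀ ∈ degreeZeroShiftMonoid S ν u₀ :=
      ⟨↑u, u.2, j, hsupp u hu, rfl⟩
    refine ⟨AddMonoidAlgebra.single (⟨↑u - j • u₀, hwmem⟩ :
      ↥(degreeZeroShiftMonoid S ν u₀)) (f.coeff u), ?_⟩
    show phi k S ν u₀ hu₀ (AddMonoidAlgebra.single
      (⟨↑u - j • u₀, hwmem⟩ : ↥(degreeZeroShiftMonoid S ν u₀)) (f.coeff u)) = _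
    rw [phi_single, psival_eq k hu₀ _ u j rfl, Localization.smul_mk,
      AddMonoidAlgebra.smul_single', mul_one]
end

section
/- Let k be a field and let S ⊆ ℤ^d be the submonoid generated by elements s₁,…,sₙ which generate ℤ^d as a group. Then the localization of the monoid algebra k[S] at the single monomial t^{s₁+⋯+sₙ} is isomorphic as a k-algebra to the group algebra k[ℤ^d] (the Laurent polynomial algebra in d variables). In particular, k[ℤ^d] is obtained from k[S] by localisation, so the torus Spec k[ℤ^d] ≅ (k^×)^d is a principal open, Zariski-dense subset of the affine toric variety Spec k[S]. -/
open AddMonoidAlgebra Finsupp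

lemma aux_single_isUnit (k : Type*) [Field k] (d : ℕ) (v : Fin d → ℤ) :
    IsUnit (AddMonoidAlgebra.single v (1 : k)) := by
  refine ⟨⟨AddMonoidAlgebra.single v 1, AddMonoidAlgebra.single (-v) 1, ?_, ?_⟩, rfl⟩ <;>
    · rw [AddMonoidAlgebra.single_mul_single]
      simp [AddMonoidAlgebra.one_def]

/-- Let `S ⊆ ℤ^d` be the submonoid generated by `s₁,…,sₙ`, which generate `ℤ^d` as a group.
Then the localization of the monoid algebra `k[S]` at the single monomial `t^{s₁+⋯+sₙ}` is
isomorphic as a `k`-algebra to the group algebra `k[ℤ^d]` of Laurent polynomials; in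
particular the torus `Spec k[ℤ^d]` is a principal open, Zariski-dense subset of the affine
toric variety `Spec k[S]`. -/
theorem statement17 (k : Type*) [Field k] (d n : ℕ) (s : Fin n → (Fin d → ℤ))
    (hgen : AddSubgroup.closure (Set.range s) = ⊤) :
    Nonempty
      (Localization.Away
          (AddMonoidAlgebra.single
            (⟨∑ i, s i,
              AddSubmonoid.sum_mem _ fun i _ => AddSubmonoid.subset_closure ⟨i, rfl⟩⟩ :
              AddSubmonoid.closure (Set.range s)) (1 : k)) ≃ₐ[k]
        AddMonoidAlgebra k (Fin d → ℤ)) := by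
  classical
  set S : AddSubmonoid (Fin d → ℤ) := AddSubmonoid.closure (Set.range s) with hS
  set σ : Fin d → ℤ := ∑ i, s i with hσ
  have hσS : σ ∈ S := AddSubmonoid.sum_mem _ fun i _ => AddSubmonoid.subset_closure ⟨i, rfl⟩
  set x : AddMonoidAlgebra k S :=
    AddMonoidAlgebra.single (⟨σ, hσS⟩ : S) (1 : k) with hx
  set φ : AddMonoidAlgebra k S →ₐ[k] AddMonoidAlgebra k (Fin d → ℤ) :=
    AddMonoidAlgebra.mapDomainAlgHom k k S.subtype with hφ
  have hφsingle : ∀ (a : S) (c : k),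
      φ (AddMonoidAlgebra.single a c) = AddMonoidAlgebra.single (a : Fin d → ℤ) c := by
    intro a c
    simp [hφ, AddMonoidAlgebra.mapDomainAlgHom, AddMonoidAlgebra.mapDomainRingHom,
      Finsupp.mapDomain_single]
  have hφinj : Function.Injective φ := by
    have : (φ : AddMonoidAlgebra k S → AddMonoidAlgebra k (Fin d → ℤ)) =
        AddMonoidAlgebra.mapDomain S.subtype := by
      funext z
      simp [hφ, AddMonoidAlgebra.mapDomainAlgHom, AddMonoidAlgebra.mapDomainRingHom]
    rw [this]
    exact AddMonoidAlgebra.mapDomain_injective Subtype.coe_injective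
  -- every element of `S` has an "inverse modulo a power of σ"
  have lemA : ∀ v ∈ S, ∃ m : ℕ, -v + m • σ ∈ S := by
    intro v hv
    induction hv using AddSubmonoid.closure_induction with
    | mem v hv =>
      obtain ⟨i, rfl⟩ := hv
      refine ⟨1, ?_⟩
      have : -s i + (1 : ℕ) • σ = ∑ j ∈ Finset.univ.erase i, s j := by
        rw [one_smul, hσ, ← Finset.add_sum_erase _ s (Finset.mem_univ i)]
        abel
      rw [this]
      exact AddSubmonoid.sum_mem _ fun j _ => AddSubmonoid.subset_closure ⟨j, rfl⟩
    | zero => exact ⟨0, by simpa using S.zero_mem⟩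
    | add v w _ _ hv hw =>
      obtain ⟨m₁, h₁⟩ := hv
      obtain ⟨m₂, h₂⟩ := hw
      refine ⟨m₁ + m₂, ?_⟩
      have : -(v + w) + (m₁ + m₂) • σ = (-v + m₁ • σ) + (-w + m₂ • σ) := by
        rw [add_smul]; abel
      rw [this]
      exact S.add_mem h₁ h₂
  -- every element of `ℤ^d` lands in `S` after adding a suitable multiple of σ
  have lemB : ∀ u : Fin d → ℤ, ∃ m : ℕ, u + m • σ ∈ S := by
    intro u
    have hu : u ∈ AddSubgroup.closure (Set.range s) := by rw [hgen]; trivial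
    induction hu using AddSubgroup.closure_induction with
    | mem u hu => exact ⟨0, by simpa using AddSubmonoid.subset_closure hu⟩
    | zero => exact ⟨0, by simpa using S.zero_mem⟩
    | add v w _ _ hv hw =>
      obtain ⟨m₁, h₁⟩ := hv
      obtain ⟨m₂, h₂⟩ := hw
      refine ⟨m₁ + m₂, ?_⟩
      have : (v + w) + (m₁ + m₂) • σ = (v + m₁ • σ) + (w + m₂ • σ) := by
        rw [add_smul]; abel
      rw [this]
      exact S.add_mem h₁ h₂
    | neg v _ hv =>
      obtain ⟨m₁, h₁⟩ := hv
      obtain ⟨m₂, h₂⟩ := lemA _ h₁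
      refine ⟨m₂, ?_⟩
      have heq : (-v : Fin d → ℤ) + m₂ • σ = (-(v + m₁ • σ) + m₂ • σ) + m₁ • σ := by
        abel
      show (-v : Fin d → ℤ) + m₂ • σ ∈ S
      rw [heq]
      exact S.add_mem h₂ (AddSubmonoid.nsmul_mem S hσS m₁)
  -- monotonicity in m
  have lemC : ∀ (u : Fin d → ℤ) (m m' : ℕ), m ≤ m' → u + m • σ ∈ S → u + m' • σ ∈ S := by
    intro u m m' hmm' hm
    have : u + m' • σ = (u + m • σ) + (m' - m) • σ := by
      rw [add_assoc, ← add_smul, Nat.add_sub_cancel' hmm']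
    rw [this]
    exact S.add_mem hm (AddSubmonoid.nsmul_mem S hσS _)
  choose f hf using lemB
  letI alg : Algebra (AddMonoidAlgebra k S) (AddMonoidAlgebra k (Fin d → ℤ)) :=
    φ.toRingHom.toAlgebra
  have halg : algebraMap (AddMonoidAlgebra k S) (AddMonoidAlgebra k (Fin d → ℤ)) = φ.toRingHom :=
    rfl
  have hxpow : ∀ m : ℕ, φ (x ^ m) = AddMonoidAlgebra.single ((m : ℕ) • σ) (1 : k) := by
    intro m
    rw [map_pow, hx, hφsingle, AddMonoidAlgebra.single_pow, one_pow]
  haveI hloc : IsLocalization (Submonoid.powers x) (AddMonoidAlgebra k (Fin d → ℤ)) := by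
    constructor
    constructor
    · rintro ⟨y, m, rfl⟩
      rw [halg]
      show IsUnit (φ (x ^ m))
      rw [hxpow]
      exact aux_single_isUnit k d _
    · intro z
      set M : ℕ := z.coeff.support.sup f with hM
      have hMS : ∀ u ∈ z.coeff.support, u + M • σ ∈ S := fun u hu =>
        lemC u (f u) M (Finset.le_sup hu) (hf u)
      refine ⟨⟨∑ u ∈ z.coeff.support.attach,
          AddMonoidAlgebra.single (⟨u.1 + M • σ, hMS u.1 u.2⟩ : S) (z.coeff u.1),
          ⟨x ^ M, ⟨M, rfl⟩⟩⟩, ?_⟩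
      rw [halg]
      show z * φ (x ^ M) = φ _
      rw [hxpow, map_sum]
      have hz : z = ∑ u ∈ z.coeff.support.attach, AddMonoidAlgebra.single u.1 (z.coeff u.1) := by
        rw [Finset.sum_attach z.coeff.support fun u => AddMonoidAlgebra.single u (z.coeff u)]
        exact (AddMonoidAlgebra.sum_coeff_single z).symm
      calc z * AddMonoidAlgebra.single (M • σ) (1 : k)
          = ∑ u ∈ z.coeff.support.attach,
              AddMonoidAlgebra.single u.1 (z.coeff u.1) * AddMonoidAlgebra.single (M • σ) 1 := by
            rw [← Finset.sum_mul, ← hz]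
        _ = ∑ u ∈ z.coeff.support.attach,
              φ (AddMonoidAlgebra.single (⟨u.1 + M • σ, hMS u.1 u.2⟩ : S) (z.coeff u.1)) := by
            refine Finset.sum_congr rfl fun u _ => ?_
            rw [AddMonoidAlgebra.single_mul_single, mul_one, hφsingle]
    · intro a b h
      rw [halg] at h
      exact ⟨1, by rw [hφinj h]⟩
  haveI tower2 : IsScalarTower k (AddMonoidAlgebra k S) (AddMonoidAlgebra k (Fin d → ℤ)) :=
    IsScalarTower.of_algebraMap_eq' (by rw [halg]; exact (φ.comp_algebraMap).symm)
  exact ⟨(Localization.algEquiv (Submonoid.powers x)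
      (AddMonoidAlgebra k (Fin d → ℤ))).restrictScalars k⟩
end
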